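/- arXiv:1904.03489 — 3 statements merged into one kernel-verified Lean document; each statement's English description precedes it below -/
import Mathlib

section
/- Let n be a square-free monic polynomial in F_q[T] with s distinct prime factors, and r ≥ 2. The number of orbits of Γ_0^r(n) acting on P^{r−1}(F_q(T)) is 2^s. -/
set_option synthInstance.maxHeartbeats 400000
set_option maxHeartbeats 1600000
set_option linter.unusedSectionVars false
set_option linter.unreachableTactic false
set_option linter.unusedTactic false
set_option linter.unusedVariables false
set_option linter.unnecessarySimpa false

/-- The orbit relation of `Γ_0^r(𝔫)` on nonzero vectors of `F_q(T)^r` up to scalars: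
`v ∼ w` iff some `γ ∈ Γ_0^r(𝔫)` (a matrix over `A = F_q[T]` with unit determinant whose
first-column entries below the top are divisible by `𝔫`) carries `v` to a nonzero scalar
multiple of `w`.  Orbits of this relation are exactly the orbits of `Γ_0^r(𝔫)` on
`P^{r−1}(F_q(T))`. -/
def GammaZeroRel {F : Type*} [Field F] (r : ℕ) [NeZero r] (n : Polynomial F)
    (v w : {v : Fin r → RatFunc F // v ≠ 0}) : Prop :=
  ∃ γ : Matrix (Fin r) (Fin r) (Polynomial F), IsUnit γ.det ∧
    (∀ i : Fin r, i ≠ 0 → n ∣ γ i 0) ∧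
    ∃ c : RatFunc F, c ≠ 0 ∧
      (γ.map (algebraMap (Polynomial F) (RatFunc F))).mulVec v.1 = c • w.1

namespace Stmt5

variable {F : Type*} [Field F]

noncomputable abbrev ι (F : Type*) [Field F] : Polynomial F →+* RatFunc F :=
  (algebraMap (Polynomial F) (RatFunc F))

lemma ι_inj : Function.Injective (ι F) := RatFunc.algebraMap_injective F

/-- `x` is `p`-integral: `x = a/b` with `p ∤ b`. -/
def IntP (p : Polynomial F) (x : RatFunc F) : Prop :=
  ∃ a b : Polynomial F, ¬ p ∣ b ∧ x * ι F b = ι F a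

lemma IntP.ofA (p : Polynomial F) (hp : ¬ p ∣ 1) (a : Polynomial F) : IntP p (ι F a) :=
  ⟨a, 1, hp, by simp⟩

lemma IntP.zero (p : Polynomial F) (hp : ¬ p ∣ 1) : IntP p 0 := ⟨0, 1, hp, by simp⟩

lemma IntP.add {p : Polynomial F} (hp : Prime p) {x y : RatFunc F} :
    IntP p x → IntP p y → IntP p (x + y) := by
  rintro ⟨a, b, hb, hab⟩ ⟨c, d, hd, hcd⟩
  refine ⟨a * d + c * b, b * d, fun h => ((hp.dvd_mul.1 h).elim hb hd), ?_⟩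
  rw [map_add, map_mul, map_mul, map_mul]
  linear_combination (ι F d) * hab + (ι F b) * hcd

lemma IntP.mul {p : Polynomial F} (hp : Prime p) {x y : RatFunc F} :
    IntP p x → IntP p y → IntP p (x * y) := by
  rintro ⟨a, b, hb, hab⟩ ⟨c, d, hd, hcd⟩
  refine ⟨a * c, b * d, fun h => ((hp.dvd_mul.1 h).elim hb hd), ?_⟩
  rw [map_mul, map_mul]
  linear_combination (ι F d) * y * hab + (ι F a) * hcd

lemma IntP.sum {p : Polynomial F} (hp : Prime p) {σ : Type*} (s : Finset σ)
    (f : σ → RatFunc F) (h : ∀ i ∈ s, IntP p (f i)) : IntP p (∑ i ∈ s, f i) := by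
  classical
  induction s using Finset.induction_on with
  | empty => simpa using IntP.zero p (fun h => hp.not_unit (isUnit_of_dvd_one h))
  | insert _ _ hx ih =>
    rw [Finset.sum_insert hx]
    exact IntP.add hp (h _ (Finset.mem_insert_self _ _))
      (ih fun i hi => h i (Finset.mem_insert_of_mem hi))

open Matrix
section TwoMat
variable {R : Type*} [CommRing R] {r : ℕ} [NeZero r]

def twoMat (i j : Fin r) (a b c d : R) : Matrix (Fin r) (Fin r) R :=
  Matrix.of fun k l =>
    if k = i then (if l = i then a else if l = j then b else 0)
    else if k = j then (if l = i then c else if l = j then d else 0)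
    else if k = l then 1 else 0

private def e (α : Fin r) : Fin r → R := Pi.single α 1

lemma e_eq_one_row (α : Fin r) : (e α : Fin r → R) = (1 : Matrix (Fin r) (Fin r) R) α := by
  ext l; simp [e, Pi.single_apply, Matrix.one_apply, eq_comm]

lemma updateRow_comm' (M : Matrix (Fin r) (Fin r) R) {i j : Fin r} (h : i ≠ j)
    (u v : Fin r → R) : (M.updateRow i u).updateRow j v = (M.updateRow j v).updateRow i u := by
  ext k l
  simp only [Matrix.updateRow_apply]
  split_ifs with h1 h2 <;> simp_all

lemma twoMat_eq_update (i j : Fin r) (hij : i ≠ j) (a b c d : R) :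
    twoMat i j a b c d =
      ((1 : Matrix (Fin r) (Fin r) R).updateRow i
        (a • (e i : Fin r → R) + b • e j)).updateRow j (c • (e i : Fin r → R) + d • e j) := by
  ext k l
  simp only [twoMat, Matrix.of_apply, Matrix.updateRow_apply, Pi.add_apply, Pi.smul_apply,
    smul_eq_mul, e, Pi.single_apply, Matrix.one_apply]
  split_ifs <;> simp_all <;> ring

lemma det_CC (i j : Fin r) (hij : i ≠ j) :
    (((1 : Matrix (Fin r) (Fin r) R).updateRow j (e j)).updateRow i (e i)).det = 1 := by
  rw [e_eq_one_row, Matrix.updateRow_eq_self, e_eq_one_row, Matrix.updateRow_eq_self,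
    Matrix.det_one]

lemma det_swap_rows (i j : Fin r) (hij : i ≠ j) :
    (((1 : Matrix (Fin r) (Fin r) R).updateRow j (e i)).updateRow i (e j)).det = -1 := by
  have h : ((1 : Matrix (Fin r) (Fin r) R).updateRow j (e i)).updateRow i (e j)
      = (1 : Matrix (Fin r) (Fin r) R).submatrix (Equiv.swap i j) id := by
    ext k l
    rcases eq_or_ne k i with rfl | hk
    · rw [Matrix.updateRow_self]
      simp [e, Pi.single_apply, Matrix.one_apply, Equiv.swap_apply_left, eq_comm]
    · rw [Matrix.updateRow_ne hk]
      rcases eq_or_ne k j with rfl | hk'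
      · rw [Matrix.updateRow_self]
        simp [e, Pi.single_apply, Matrix.one_apply, Equiv.swap_apply_right, eq_comm]
      · rw [Matrix.updateRow_ne hk']
        simp [Matrix.one_apply, Equiv.swap_apply_of_ne_of_ne hk hk']
  rw [h, Matrix.det_permute, Matrix.det_one, Equiv.Perm.sign_swap hij]
  simp

lemma det_rep_i (i j : Fin r) (hij : i ≠ j) :
    (((1 : Matrix (Fin r) (Fin r) R).updateRow j (e i)).updateRow i (e i)).det = 0 := by
  refine Matrix.det_zero_of_row_eq hij ?_
  rw [Matrix.updateRow_self, Matrix.updateRow_ne hij.symm, Matrix.updateRow_self]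

lemma det_rep_j (i j : Fin r) (hij : i ≠ j) :
    (((1 : Matrix (Fin r) (Fin r) R).updateRow j (e j)).updateRow i (e j)).det = 0 := by
  refine Matrix.det_zero_of_row_eq hij ?_
  rw [Matrix.updateRow_self, Matrix.updateRow_ne hij.symm, Matrix.updateRow_self]

lemma det_twoMat (i j : Fin r) (hij : i ≠ j) (a b c d : R) :
    (twoMat i j a b c d).det = a * d - b * c := by
  rw [twoMat_eq_update i j hij]
  rw [Matrix.det_updateRow_add, Matrix.det_updateRow_smul, Matrix.det_updateRow_smul]
  rw [updateRow_comm' _ hij, updateRow_comm' _ hij]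
  rw [Matrix.det_updateRow_add, Matrix.det_updateRow_smul, Matrix.det_updateRow_smul,
    Matrix.det_updateRow_add, Matrix.det_updateRow_smul, Matrix.det_updateRow_smul]
  rw [det_CC i j hij, det_swap_rows i j hij, det_rep_i i j hij, det_rep_j i j hij]
  ring

lemma twoMat_mulVec (i j : Fin r) (hij : i ≠ j) (a b c d : R) (x : Fin r → R) :
    (twoMat i j a b c d).mulVec x = fun k =>
      if k = i then a * x i + b * x j else if k = j then c * x i + d * x j else x k := by
  funext k
  rcases eq_or_ne k i with hki | hk
  · simp only [hki, eq_self_iff_true, if_true]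
    simp only [Matrix.mulVec, dotProduct, twoMat, Matrix.of_apply, eq_self_iff_true,
      if_true]
    rw [Fintype.sum_eq_add i j hij (f := fun l =>
        (if l = i then a else if l = j then b else 0) * x l)
        (fun l hl => by simp [hl.1, hl.2])]
    simp [hij.symm]
  · rw [if_neg hk]
    rcases eq_or_ne k j with hkj | hk'
    · simp only [hkj, eq_self_iff_true, if_true, if_neg hij.symm]
      simp only [Matrix.mulVec, dotProduct, twoMat, Matrix.of_apply, eq_self_iff_true,
        if_true, if_neg hij.symm]
      rw [Fintype.sum_eq_add i j hij (f := fun l =>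
          (if l = i then c else if l = j then d else 0) * x l)
          (fun l hl => by simp [hl.1, hl.2])]
      simp [hij, hij.symm]
    · rw [if_neg hk']
      simp only [Matrix.mulVec, dotProduct, twoMat, Matrix.of_apply, if_neg hk, if_neg hk']
      rw [Fintype.sum_eq_single k (f := fun l => (if k = l then (1:R) else 0) * x l)
          (fun l hl => by simp [Ne.symm hl])]
      simp

end TwoMat

section Rel
variable {F : Type*} [Field F] {r : ℕ} [NeZero r] (n : Polynomial F)

lemma map_mulVec (γ : Matrix (Fin r) (Fin r) (Polynomial F)) (x : Fin r → Polynomial F) :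
    (γ.map (ι F)).mulVec (fun i => ι F (x i)) = fun i => ι F (γ.mulVec x i) := by
  funext i
  simp [Matrix.mulVec, dotProduct, Matrix.map_apply, map_sum, _root_.map_mul]

noncomputable def embA (x : Fin r → Polynomial F) (hx : x ≠ 0) : {v : Fin r → RatFunc F // v ≠ 0} :=
  ⟨fun i => ι F (x i), by
    intro h
    apply hx
    funext i
    have := congrFun h i
    simpa using ι_inj (by simpa using this)⟩

lemma mulVec_ne_zero {γ : Matrix (Fin r) (Fin r) (Polynomial F)} (hdet : IsUnit γ.det)
    {x : Fin r → Polynomial F} (hx : x ≠ 0) : γ.mulVec x ≠ 0 := by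
  intro h
  apply hx
  have h1 : γ⁻¹ * γ = 1 := Matrix.nonsing_inv_mul γ hdet
  calc x = (γ⁻¹ * γ).mulVec x := by rw [h1, Matrix.one_mulVec]
    _ = γ⁻¹.mulVec (γ.mulVec x) := (Matrix.mulVec_mulVec x γ⁻¹ γ).symm
    _ = 0 := by rw [h, Matrix.mulVec_zero]

lemma relStep (x : Fin r → Polynomial F) (hx : x ≠ 0) (γ : Matrix (Fin r) (Fin r) (Polynomial F))
    (hdet : IsUnit γ.det) (hcol : ∀ i : Fin r, i ≠ 0 → n ∣ γ i 0) :
    GammaZeroRel r n (embA x hx) (embA (γ.mulVec x) (mulVec_ne_zero hdet hx)) := by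
  refine ⟨γ, hdet, hcol, 1, one_ne_zero, ?_⟩
  rw [one_smul]
  exact map_mulVec γ x

lemma relScale (v : {v : Fin r → RatFunc F // v ≠ 0}) (x : Fin r → Polynomial F)
    (hx : x ≠ 0) (c : RatFunc F) (hc : c ≠ 0) (h : v.1 = c • (embA x hx).1) :
    GammaZeroRel r n v (embA x hx) := by
  refine ⟨1, by simp, fun i hi => by simp [Matrix.one_apply, hi], c, hc, ?_⟩
  have : (1 : Matrix (Fin r) (Fin r) (Polynomial F)).map (ι F) = 1 := by
    ext i j; simp [Matrix.map_apply, Matrix.one_apply, apply_ite (ι F)]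
  rw [this, Matrix.one_mulVec, h]

/-- the p-local invariant. -/
def phi (p : Polynomial F) (v : Fin r → RatFunc F) : Prop :=
  v 0 ≠ 0 ∧ ∀ i : Fin r, i ≠ 0 → ∃ y : RatFunc F, IntP p y ∧ v i = ι F p * y * v 0

lemma rel_symm {v w : {v : Fin r → RatFunc F // v ≠ 0}} (h : GammaZeroRel r n v w) :
    GammaZeroRel r n w v := by
  obtain ⟨γ, hdet, hcol, c, hc, hEq⟩ := h
  have hdetne : γ.det ≠ 0 := hdet.ne_zero
  refine ⟨γ.adjugate, by rw [Matrix.det_adjugate]; exact hdet.pow _, ?_, c⁻¹ * ι F γ.det,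
    mul_ne_zero (inv_ne_zero hc) (fun h0 => hdetne (ι_inj (by rw [h0, map_zero]))), ?_⟩
  · intro i hi
    set q := Ideal.Quotient.mk (Ideal.span {n}) with hq
    rw [← Ideal.mem_span_singleton, ← Ideal.Quotient.eq_zero_iff_mem, ← hq]
    have h1 : q (γ.adjugate i 0) = (γ.map q).adjugate i 0 := by
      have := RingHom.map_adjugate q γ
      have h2 := congrFun (congrFun (congrArg (fun M => (M : Matrix (Fin r) (Fin r) _)) this) i) 0
      simpa [RingHom.mapMatrix_apply] using h2
    rw [h1, Matrix.adjugate_apply]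
    refine Matrix.det_eq_zero_of_column_eq_zero 0 (fun l => ?_)
    rcases eq_or_ne l 0 with rfl | hl
    · rw [Matrix.updateRow_self]
      simp [Pi.single_apply, hi.symm]
    · rw [Matrix.updateRow_ne hl]
      simp only [Matrix.map_apply, hq]
      rw [Ideal.Quotient.eq_zero_iff_mem, Ideal.mem_span_singleton]
      exact hcol l hl
  · have key : ((γ.adjugate.map (ι F)) * (γ.map (ι F))).mulVec v.1
        = (ι F γ.det) • v.1 := by
      rw [← Matrix.map_mul, Matrix.adjugate_mul]
      have : ((γ.det • (1 : Matrix (Fin r) (Fin r) (Polynomial F))).map (ι F))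
          = (ι F γ.det) • (1 : Matrix (Fin r) (Fin r) (RatFunc F))  := by
        ext i j
        simp [Matrix.map_apply, Matrix.one_apply, apply_ite (ι F), mul_ite]
      rw [this, Matrix.smul_mulVec, Matrix.one_mulVec]
    have h2 : (γ.adjugate.map (ι F)).mulVec (c • w.1) = (ι F γ.det) • v.1 := by
      rw [← hEq, Matrix.mulVec_mulVec, key]
    rw [Matrix.mulVec_smul] at h2
    have h3 : (γ.adjugate.map (ι F)).mulVec w.1
        = c⁻¹ • ((ι F γ.det) • v.1) := by
      rw [← h2, smul_smul, inv_mul_cancel₀ hc, one_smul]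
    rw [h3, smul_smul]

lemma phi_inv {p' : Polynomial F} (hp : Prime p') (hpn : p' ∣ n)
    {v w : {v : Fin r → RatFunc F // v ≠ 0}} (h : GammaZeroRel r n v w) :
    phi p' v.1 → phi p' w.1 := by
  obtain ⟨γ, hdet, hcol, c, hc, hEq⟩ := h
  rintro ⟨hv0, hloc⟩
  have hp1 : ¬ p' ∣ (1 : Polynomial F) := fun hd => hp.not_isUnit (isUnit_of_dvd_one hd)
  classical
  -- uniform local data
  have hY : ∃ Y : Fin r → RatFunc F, ∀ j : Fin r, j ≠ 0 →
      IntP p' (Y j) ∧ v.1 j = ι F p' * Y j * v.1 0 := by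
    choose y h1 h2 using hloc
    exact ⟨fun j => if hj : j ≠ 0 then y j hj else 0,
      fun j hj => by simp only [dif_pos hj]; exact ⟨h1 j hj, h2 j hj⟩⟩
  obtain ⟨Y, hY⟩ := hY
  set Z : Fin r → RatFunc F := fun i => ∑ j ∈ Finset.univ.erase 0, ι F (γ i j) * Y j with hZ
  have hZI : ∀ i, IntP p' (Z i) := fun i =>
    IntP.sum hp _ _ (fun j hj => IntP.mul hp (IntP.ofA p' hp1 _)
      (hY j (Finset.mem_erase.1 hj).1).1)
  have hW : ∀ i, ((γ.map (ι F)).mulVec v.1) i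
      = ι F (γ i 0) * v.1 0 + ι F p' * Z i * v.1 0 := by
    intro i
    have : ((γ.map (ι F)).mulVec v.1) i = ∑ j, ι F (γ i j) * v.1 j := by
      simp [Matrix.mulVec, dotProduct, Matrix.map_apply]
    rw [this, ← Finset.add_sum_erase _ _ (Finset.mem_univ (0 : Fin r))]
    congr 1
    have h3 : ι F p' * Z i * v.1 0
        = ∑ j ∈ Finset.univ.erase 0, ι F p' * (ι F (γ i j) * Y j) * v.1 0 := by
      simp only [hZ]
      rw [Finset.mul_sum, Finset.sum_mul]
    rw [h3]
    refine Finset.sum_congr rfl (fun j hj => ?_)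
    rw [(hY j (Finset.mem_erase.1 hj).1).2]
    ring
  -- p' does not divide γ 0 0
  have h00 : ¬ p' ∣ γ 0 0 := by
    intro h00
    set q := Ideal.Quotient.mk (Ideal.span {p'}) with hq
    have hcolz : ∀ i, (γ.map q) i 0 = 0 := by
      intro i
      simp only [Matrix.map_apply, hq]
      rw [Ideal.Quotient.eq_zero_iff_mem, Ideal.mem_span_singleton]
      rcases eq_or_ne i 0 with rfl | hi
      · exact h00
      · exact dvd_trans hpn (hcol i hi)
    have hd0 : q γ.det = 0 := by
      have := RingHom.map_det q γ
      rw [RingHom.mapMatrix_apply] at this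
      rw [this]
      exact Matrix.det_eq_zero_of_column_eq_zero 0 hcolz
    rw [Ideal.Quotient.eq_zero_iff_mem, Ideal.mem_span_singleton] at hd0
    exact hp.not_isUnit (isUnit_of_dvd_unit hd0 hdet)
  obtain ⟨a0, b0, hb0, hZ0⟩ := hZI 0
  set u0 : RatFunc F := ι F (γ 0 0) + ι F p' * Z 0 with hu0
  set N : Polynomial F := γ 0 0 * b0 + p' * a0 with hN
  have hu0b : u0 * ι F b0 = ι F N := by
    rw [hu0, hN, map_add, _root_.map_mul, _root_.map_mul]
    linear_combination ι F p' * hZ0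
  have hNd : ¬ p' ∣ N := by
    intro hd
    rw [hN] at hd
    have : p' ∣ γ 0 0 * b0 := (dvd_add_right (Dvd.intro _ rfl)).1 (by rwa [add_comm] at hd)
    rcases hp.dvd_mul.1 this with h' | h'
    · exact h00 h'
    · exact hb0 h'
  have hNne : (ι F N : RatFunc F) ≠ 0 := by
    intro h0
    have : N = 0 := ι_inj (by rw [h0, map_zero])
    exact hNd (this ▸ dvd_zero p')
  have hb0ne : (ι F b0 : RatFunc F) ≠ 0 := by
    intro h0
    have : b0 = 0 := ι_inj (by rw [h0, map_zero])
    exact hb0 (this ▸ dvd_zero p')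
  have hu0ne : u0 ≠ 0 := by
    intro h0
    rw [h0, zero_mul] at hu0b
    exact hNne hu0b.symm
  have hw : ∀ i, w.1 i = c⁻¹ * ((γ.map (ι F)).mulVec v.1) i := by
    intro i
    have := congrFun hEq i
    rw [Pi.smul_apply, smul_eq_mul] at this
    rw [this]
    field_simp
  have hw0 : w.1 0 = c⁻¹ * (u0 * v.1 0) := by
    rw [hw 0, hW 0, hu0]; ring
  have hw0ne : w.1 0 ≠ 0 :=
    hw0 ▸ mul_ne_zero (inv_ne_zero hc) (mul_ne_zero hu0ne hv0)
  refine ⟨hw0ne, fun i hi => ?_⟩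
  obtain ⟨t, ht⟩ : p' ∣ γ i 0 := dvd_trans hpn (hcol i hi)
  obtain ⟨ai, bi, hbi, hZi⟩ := hZI i
  set Z' : RatFunc F := ι F t + Z i with hZ'
  refine ⟨Z' * u0⁻¹, ⟨(ai + t * bi) * b0, bi * N,
      fun hd => (hp.dvd_mul.1 hd).elim hbi hNd, ?_⟩, ?_⟩
  · have hinv : u0⁻¹ * ι F N = ι F b0 := by
      rw [← hu0b]
      field_simp
    rw [hZ']
    calc (ι F t + Z i) * u0⁻¹ * ι F (bi * N)
        = (ι F t + Z i) * ι F bi * (u0⁻¹ * ι F N) := by rw [_root_.map_mul]; ring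
      _ = (ι F t * ι F bi + Z i * ι F bi) * ι F b0 := by rw [hinv]; ring
      _ = (ι F t * ι F bi + ι F ai) * ι F b0 := by rw [hZi]
      _ = ι F ((ai + t * bi) * b0) := by rw [_root_.map_mul, _root_.map_add, _root_.map_mul]; ring
  · have hWi : ((γ.map (ι F)).mulVec v.1) i = ι F p' * Z' * v.1 0 := by
      rw [hW i, ht, hZ', _root_.map_mul]
      ring
    rw [hw i, hWi, hw0]
    field_simp

lemma twoMat_col0 {i j : Fin r} (hi : i ≠ 0) (hj : j ≠ 0) (a b c d : Polynomial F)
    {l : Fin r} (hl : l ≠ 0) : twoMat i j a b c d l 0 = 0 := by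
  simp only [twoMat, Matrix.of_apply]
  split_ifs with h1 h2 h3 h4 h5 <;> simp_all [eq_comm]

end Rel

section Euclid
variable {F : Type*} [Field F] {r : ℕ} [NeZero r] (n : Polynomial F)
open scoped Classical

noncomputable def pw (a : Polynomial F) : ℕ := if a = 0 then 0 else a.natDegree + 1

noncomputable def meas (k1 : Fin r) (x : Fin r → Polynomial F) : ℕ :=
  ∑ i ∈ Finset.univ.filter (fun i => i ≠ 0 ∧ i ≠ k1), pw (x i)

lemma euclid_done (x : Fin r → Polynomial F) (hx : x ≠ 0) (k1 : Fin r)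
    (hdone : ∀ i, i ≠ 0 → i ≠ k1 → x i = 0) :
    ∃ (y : Fin r → Polynomial F) (hy : y ≠ 0),
      Relation.EqvGen (GammaZeroRel r n) (embA x hx) (embA y hy) ∧
      y 0 = x 0 ∧ (∀ i, i ≠ 0 → i ≠ k1 → y i = 0) ∧
      (∀ z : Polynomial F, (∀ i, i ≠ 0 → z ∣ x i) ↔ (∀ i, i ≠ 0 → z ∣ y i)) :=
  ⟨x, hx, Relation.EqvGen.refl _, rfl, hdone, fun _ => Iff.rfl⟩

lemma euclid (k1 : Fin r) (hk1 : k1 ≠ 0) : ∀ (N : ℕ) (x : Fin r → Polynomial F) (hx : x ≠ 0),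
    meas k1 x ≤ N → ∃ (y : Fin r → Polynomial F) (hy : y ≠ 0),
      Relation.EqvGen (GammaZeroRel r n) (embA x hx) (embA y hy) ∧
      y 0 = x 0 ∧ (∀ i, i ≠ 0 → i ≠ k1 → y i = 0) ∧
      (∀ z : Polynomial F, (∀ i, i ≠ 0 → z ∣ x i) ↔ (∀ i, i ≠ 0 → z ∣ y i)) := by
  intro N
  induction N with
  | zero =>
    intro x hx hm
    refine euclid_done n x hx k1 (fun i hi0 hik => ?_)
    have h0 : meas k1 x = 0 := Nat.le_zero.1 hm
    have := (Finset.sum_eq_zero_iff.1 h0) i (by simp [hi0, hik])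
    by_contra hne
    simp [pw, hne] at this
  | succ N ih =>
    intro x hx hm
    by_cases hdone : ∀ i, i ≠ 0 → i ≠ k1 → x i = 0
    · exact euclid_done n x hx k1 hdone
    · push_neg at hdone
      obtain ⟨i, hi0, hik, hxi⟩ := hdone
      -- euclid step on (x k1, x i)
      set m : Polynomial F := x i * Polynomial.C (x i).leadingCoeff⁻¹ with hmdef
      have hmm : m.Monic := Polynomial.monic_mul_leadingCoeff_inv hxi
      set q : Polynomial F := Polynomial.C (x i).leadingCoeff⁻¹ * (x k1 /ₘ m) with hqdef
      set rem : Polynomial F := x k1 %ₘ m with hremdef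
      have hrem : x k1 = q * x i + rem := by
        have h1 := Polynomial.modByMonic_add_div (x k1) m
        rw [hqdef, hremdef]
        linear_combination - h1 + (x k1 /ₘ m) * hmdef
      have hdeg : rem = 0 ∨ rem.natDegree < (x i).natDegree := by
        rcases eq_or_ne rem 0 with h | h
        · exact Or.inl h
        · refine Or.inr (Polynomial.natDegree_lt_natDegree h ?_)
          have := Polynomial.degree_modByMonic_lt (x k1) hmm
          rw [← hremdef] at this
          rwa [hmdef, Polynomial.degree_mul_leadingCoeff_inv _ hxi] at this
      set γ : Matrix (Fin r) (Fin r) (Polynomial F) := twoMat k1 i 0 1 1 (-q) with hγ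
      have hkine : k1 ≠ i := Ne.symm hik
      have hdet : IsUnit γ.det := by
        rw [hγ, det_twoMat k1 i hkine]
        simp
      have hcol : ∀ l : Fin r, l ≠ 0 → n ∣ γ l 0 := fun l hl => by
        rw [hγ, twoMat_col0 hk1 hi0 _ _ _ _ hl]
        exact dvd_zero n
      set x' : Fin r → Polynomial F :=
        fun k => if k = k1 then x i else if k = i then rem else x k with hx'def
      have hxx : γ.mulVec x = x' := by
        rw [hγ, twoMat_mulVec k1 i hkine]
        funext k
        simp only [hx'def]
        by_cases h1 : k = k1
        · rw [if_pos h1, if_pos h1]; ring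
        · rw [if_neg h1, if_neg h1]
          by_cases h2 : k = i
          · rw [if_pos h2, if_pos h2, hrem]; ring
          · rw [if_neg h2, if_neg h2]
      have hx'ne : x' ≠ 0 := hxx ▸ mulVec_ne_zero hdet hx
      have hx'k1 : x' k1 = x i := by simp [hx'def]
      have hx'i : x' i = rem := by simp [hx'def, hik]
      have hx'other : ∀ j, j ≠ k1 → j ≠ i → x' j = x j := by
        intro j h1 h2; simp [hx'def, h1, h2]
      have hmeas : meas k1 x' ≤ N := by
        have hpwlt : pw rem < pw (x i) := by
          rcases hdeg with h | h
          · simp only [pw, if_pos h, if_neg hxi]; omega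
          · simp only [pw]
            split_ifs <;> omega
        have hlt : meas k1 x' < meas k1 x := by
          refine Finset.sum_lt_sum (fun j hj => ?_) ⟨i, by simp [hi0, hik], ?_⟩
          · simp only [Finset.mem_filter] at hj
            rcases eq_or_ne j i with rfl | hji
            · rw [hx'i]; exact le_of_lt hpwlt
            · rw [hx'other j hj.2.2 hji]
          · rw [hx'i]; exact hpwlt
        omega
      obtain ⟨y, hy, hchain, hy0, hyz, hydvd⟩ := ih x' hx'ne hmeas
      refine ⟨y, hy, ?_, ?_, hyz, ?_⟩
      · refine Relation.EqvGen.trans _ _ _ ?_ hchain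
        have hstep := relStep n x hx γ hdet hcol
        have heq : embA (γ.mulVec x) (mulVec_ne_zero hdet hx) = embA x' hx'ne := by
          simp only [hxx]
        rw [heq] at hstep
        exact Relation.EqvGen.rel _ _ hstep
      · rw [hy0, hx'other 0 (Ne.symm hk1) (Ne.symm hi0)]
      · intro z
        have hr2 : rem = x k1 - q * x i := by rw [hrem]; ring
        rw [← hydvd z]
        constructor
        · intro h j hj
          rcases eq_or_ne j k1 with h1 | h1
          · rw [h1, hx'k1]; exact h i hi0
          · rcases eq_or_ne j i with h2 | h2
            · rw [h2, hx'i, hr2]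
              exact dvd_sub (h k1 hk1) (Dvd.dvd.mul_left (h i hi0) q)
            · rw [hx'other j h1 h2]; exact h j hj
        · intro h j hj
          rcases eq_or_ne j i with h2 | h2
          · have hh := h k1 hk1
            rw [hx'k1] at hh
            rw [h2]; exact hh
          · rcases eq_or_ne j k1 with h1 | h1
            · rw [h1, hrem]
              have h3 := h i hi0
              rw [hx'i] at h3
              have h4 := h k1 hk1
              rw [hx'k1] at h4
              exact dvd_add (Dvd.dvd.mul_left h4 q) h3
            · have hh := h j hj
              rw [hx'other j h1 h2] at hh
              exact hh

end Euclid

section Scale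
variable {F : Type*} [Field F] {r : ℕ} [NeZero r] (n : Polynomial F)

lemma scale (v : {v : Fin r → RatFunc F // v ≠ 0}) :
    ∃ (u : Fin r → Polynomial F) (hu : u ≠ 0),
      (∀ z : Polynomial F, (∀ i, z ∣ u i) → IsUnit z) ∧ GammaZeroRel r n v (embA u hu) := by
  classical
  set D : Polynomial F := ∏ j, (v.1 j).denom with hD
  have hDne : D ≠ 0 := Finset.prod_ne_zero_iff.2 (fun j _ => RatFunc.denom_ne_zero _)
  set u' : Fin r → Polynomial F :=
    fun i => (v.1 i).num * ∏ j ∈ Finset.univ.erase i, (v.1 j).denom with hu'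
  have hιden : ∀ i : Fin r, (ι F ((v.1 i).denom) : RatFunc F) ≠ 0 := by
    intro i h0
    exact RatFunc.denom_ne_zero (v.1 i) (ι_inj (by rw [h0, map_zero]))
  have key : ∀ i, ι F (u' i) = ι F D * v.1 i := by
    intro i
    have h1 : (v.1 i).denom * ∏ j ∈ Finset.univ.erase i, (v.1 j).denom = D := by
      rw [hD]; exact Finset.mul_prod_erase Finset.univ (fun j => (v.1 j).denom) (Finset.mem_univ i)
    have h2 : ι F ((v.1 i).denom) * v.1 i = ι F ((v.1 i).num) := by
      have h5 := RatFunc.num_div_denom (v.1 i)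
      rw [div_eq_iff (hιden i)] at h5
      linear_combination -h5
    rw [hu', ← h1, _root_.map_mul, _root_.map_mul]
    calc ι F ((v.1 i).num) * ι F (∏ j ∈ Finset.univ.erase i, (v.1 j).denom)
        = (ι F ((v.1 i).denom) * v.1 i) * ι F (∏ j ∈ Finset.univ.erase i, (v.1 j).denom) := by
          rw [h2]
      _ = ι F ((v.1 i).denom) * ι F (∏ j ∈ Finset.univ.erase i, (v.1 j).denom) * v.1 i := by
          ring
  have hu'ne : u' ≠ 0 := by
    have hvne := v.2
    rw [Function.ne_iff] at hvne
    obtain ⟨i, hi⟩ := hvne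
    intro h0
    apply hi
    have : ι F (u' i) = 0 := by rw [h0]; simp
    rw [key i] at this
    rcases mul_eq_zero.1 this with h | h
    · exact absurd (ι_inj (by rw [h, map_zero])) hDne
    · exact h
  obtain ⟨e, he, hge⟩ := Finset.extract_gcd u' ⟨0, Finset.mem_univ 0⟩
  set G : Polynomial F := Finset.univ.gcd u' with hG
  have heq : ∀ i, u' i = G * e i := fun i => he i (Finset.mem_univ i)
  have hene : e ≠ 0 := by
    intro h0
    apply hu'ne
    funext i
    rw [heq i, h0]
    simp
  have hGne : G ≠ 0 := by
    intro h0
    apply hu'ne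
    funext i
    rw [heq i, h0, zero_mul]
    rfl
  refine ⟨e, hene, ?_, ?_⟩
  · intro z hz
    have : z ∣ Finset.univ.gcd e := Finset.dvd_gcd (fun i _ => hz i)
    rw [hge] at this
    exact isUnit_of_dvd_one this
  · refine relScale n v e hene (ι F G / ι F D) ?_ ?_
    · apply div_ne_zero <;> intro h0
      · exact hGne (ι_inj (by rw [h0, map_zero]))
      · exact hDne (ι_inj (by rw [h0, map_zero]))
    · funext i
      have h3 : ι F G * ι F (e i) = ι F D * v.1 i := by
        rw [← _root_.map_mul, ← heq i, key i]
      have hDK : (ι F D : RatFunc F) ≠ 0 := fun h0 => hDne (ι_inj (by rw [h0, map_zero]))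
      show v.1 i = (ι F G / ι F D) * (embA e hene).1 i
      have h4 : (embA e hene).1 i = ι F (e i) := rfl
      rw [h4]
      field_simp
      linear_combination -h3

end Scale

section Cop
variable {F : Type*} [Field F]
open scoped Classical

lemma coprime_of_no_common {a b : Polynomial F}
    (h : ∀ z : Polynomial F, z ∣ a → z ∣ b → IsUnit z) : IsCoprime a b := by
  have hu : IsUnit (EuclideanDomain.gcd a b) :=
    h _ (EuclideanDomain.gcd_dvd_left a b) (EuclideanDomain.gcd_dvd_right a b)
  obtain ⟨w, hw⟩ := hu.exists_left_inv
  refine ⟨w * EuclideanDomain.gcdA a b, w * EuclideanDomain.gcdB a b, ?_⟩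
  have h2 := EuclideanDomain.gcd_eq_gcd_ab a b
  calc w * EuclideanDomain.gcdA a b * a + w * EuclideanDomain.gcdB a b * b
      = w * (a * EuclideanDomain.gcdA a b + b * EuclideanDomain.gcdB a b) := by ring
    _ = w * EuclideanDomain.gcd a b := by rw [← h2]
    _ = 1 := hw

lemma irr_coprime {p q : Polynomial F} (hp : Irreducible p) (h : ¬ p ∣ q) : IsCoprime p q := by
  refine coprime_of_no_common (fun z hzp hzq => ?_)
  obtain ⟨c, hc⟩ := hzp
  rcases hp.isUnit_or_isUnit hc with h1 | h1
  · exact h1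
  · exfalso
    obtain ⟨cu, rfl⟩ := h1
    have hpz : p ∣ z := ⟨((cu⁻¹ : (Polynomial F)ˣ) : Polynomial F),
      by rw [hc, mul_assoc, Units.mul_inv, mul_one]⟩
    exact h (dvd_trans hpz hzq)

lemma pcop {s : ℕ} {p : Fin s → Polynomial F} (hirr : ∀ i, Irreducible (p i))
    (hpm : ∀ i, (p i).Monic) (hinj : Function.Injective p) {i j : Fin s} (hij : i ≠ j) :
    IsCoprime (p i) (p j) := by
  refine irr_coprime (hirr i) (fun hdvd => ?_)
  have hass := (hirr i).associated_of_dvd (hirr j) hdvd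
  exact hij (hinj (Polynomial.eq_of_monic_of_associated (hpm i) (hpm j) hass))

end Cop

section Phase2
variable {F : Type*} [Field F] {r : ℕ} [NeZero r]
open scoped Classical

lemma phase2 {s : ℕ} (p : Fin s → Polynomial F) (hirr : ∀ i, Irreducible (p i))
    (hpm : ∀ i, (p i).Monic) (hinj : Function.Injective p) (n : Polynomial F)
    (hfac : n = ∏ i, p i) (k1 : Fin r) (hk1 : k1 ≠ 0) (a b : Polynomial F)
    (hab : ∀ z : Polynomial F, z ∣ a → z ∣ b → IsUnit z) :
    ∃ (t : Finset (Fin s)) (γ : Matrix (Fin r) (Fin r) (Polynomial F)), IsUnit γ.det ∧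
      (∀ l : Fin r, l ≠ 0 → n ∣ γ l 0) ∧ (∀ i, i ∈ t ↔ p i ∣ b) ∧
      γ.mulVec (fun k => if k = 0 then 1 else if k = k1 then ∏ i ∈ t, p i else 0)
        = (fun k => if k = 0 then a else if k = k1 then b else 0) := by
  set t : Finset (Fin s) := Finset.univ.filter (fun i => p i ∣ b) with ht
  have hmemt : ∀ i, i ∈ t ↔ p i ∣ b := fun i => by simp [ht]
  set d : Polynomial F := ∏ i ∈ t, p i with hd
  set m : Polynomial F := ∏ i ∈ Finset.univ.filter (fun i => ¬ p i ∣ b), p i with hm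
  have hnm : n = d * m := by
    rw [hfac, hd, hm, ht, Finset.prod_filter_mul_prod_filter_not]
  have hdb : d ∣ b := by
    refine Finset.prod_dvd_of_coprime ?_ (fun i hi => (hmemt i).1 hi)
    intro i hi j hj hij
    exact pcop hirr hpm hinj hij
  have h_ad : IsCoprime a d := (coprime_of_no_common hab).of_isCoprime_of_dvd_right hdb
  obtain ⟨b', hb'⟩ := hdb
  have hcop_ab : IsCoprime a b := coprime_of_no_common hab
  have h_ab' : IsCoprime a b' := hcop_ab.of_isCoprime_of_dvd_right ⟨d, by rw [hb']; ring⟩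
  have h_md : IsCoprime m d := by
    rw [hm, hd]
    refine IsCoprime.prod_left (fun i hi => IsCoprime.prod_right (fun j hj => ?_))
    have hij : i ≠ j := by
      intro h
      rw [Finset.mem_filter] at hi
      rw [ht, Finset.mem_filter] at hj
      exact hi.2 (h ▸ hj.2)
    exact pcop hirr hpm hinj hij
  have h_mb' : IsCoprime m b' := by
    rw [hm]
    refine IsCoprime.prod_left (fun i hi => ?_)
    rw [Finset.mem_filter] at hi
    refine irr_coprime (hirr i) (fun hdvd => ?_)
    exact hi.2 (hdvd.trans ⟨d, by rw [hb']; ring⟩)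
  have hcop : IsCoprime (a * m) (d * b') :=
    IsCoprime.mul_left (h_ad.mul_right h_ab') (h_md.mul_right h_mb')
  obtain ⟨uu, vv, huv⟩ := hcop
  set ss : Polynomial F := uu * (a * b' - 1) with hss
  set ββ : Polynomial F := vv * (a * b' - 1) with hββ
  have hsb : ss * (a * m) + ββ * (d * b') = a * b' - 1 := by
    rw [hss, hββ]
    linear_combination (a * b' - 1) * huv
  set δ : Polynomial F := b' - m * ss with hδ
  set α : Polynomial F := a - ββ * d with hα
  have h0k1 : (0 : Fin r) ≠ k1 := Ne.symm hk1
  refine ⟨t, twoMat 0 k1 α ββ (n * ss) δ, ?_, ?_, hmemt, ?_⟩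
  · rw [det_twoMat 0 k1 h0k1]
    have hone : α * δ - ββ * (n * ss) = 1 := by
      rw [hα, hδ, hnm]
      linear_combination -hsb
    rw [hone]
    exact isUnit_one
  · intro l hl
    simp only [twoMat, Matrix.of_apply]
    rw [if_neg hl]
    by_cases h2 : l = k1
    · rw [if_pos h2]
      simpa using Dvd.intro ss rfl
    · rw [if_neg h2, if_neg hl]
      exact dvd_zero n
  · rw [twoMat_mulVec 0 k1 h0k1]
    funext k
    simp only [eq_self_iff_true, if_true, if_neg hk1]
    by_cases h1 : k = 0
    · simp only [h1, eq_self_iff_true, if_true, if_neg h0k1]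
      rw [hα, ← hd]
      ring
    · simp only [if_neg h1]
      by_cases h2 : k = k1
      · simp only [h2, eq_self_iff_true, if_true, if_neg hk1]
        rw [hδ, ← hd, hnm, hb']
        ring
      · simp only [if_neg h2]

end Phase2

section Main
variable {F : Type*} [Field F] {r : ℕ} [NeZero r]
open scoped Classical

noncomputable def cvecA {s : ℕ} (p : Fin s → Polynomial F) (k1 : Fin r) (t : Finset (Fin s)) :
    Fin r → Polynomial F := fun k => if k = 0 then 1 else if k = k1 then ∏ i ∈ t, p i else 0

lemma cvecA_ne {s : ℕ} (p : Fin s → Polynomial F) (k1 : Fin r) (t : Finset (Fin s)) :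
    cvecA p k1 t ≠ 0 := by
  intro h
  have := congrFun h 0
  simp [cvecA] at this

noncomputable def cvec {s : ℕ} (p : Fin s → Polynomial F) (k1 : Fin r) (t : Finset (Fin s)) :
    {v : Fin r → RatFunc F // v ≠ 0} := embA (cvecA p k1 t) (cvecA_ne p k1 t)

lemma embA_congr {x x' : Fin r → Polynomial F} (hx : x ≠ 0) (hx' : x' ≠ 0) (h : x = x') :
    embA x hx = embA x' hx' := by subst h; rfl

lemma canon {s : ℕ} (p : Fin s → Polynomial F) (hirr : ∀ i, Irreducible (p i))
    (hpm : ∀ i, (p i).Monic) (hinj : Function.Injective p) (n : Polynomial F)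
    (hfac : n = ∏ i, p i) (k1 : Fin r) (hk1 : k1 ≠ 0)
    (v : {v : Fin r → RatFunc F // v ≠ 0}) :
    ∃ t : Finset (Fin s), Relation.EqvGen (GammaZeroRel r n) v (cvec p k1 t) := by
  obtain ⟨u, hu, hprim, hrel⟩ := scale n v
  obtain ⟨y, hy, hchain, hy0, hyz, hydvd⟩ := euclid n k1 hk1 (meas k1 u) u hu le_rfl
  have hab : ∀ z : Polynomial F, z ∣ y 0 → z ∣ y k1 → IsUnit z := by
    intro z h0 h1
    refine hprim z (fun i => ?_)
    rcases eq_or_ne i 0 with h | h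
    · rw [h, ← hy0]; exact h0
    · refine (hydvd z).2 (fun j hj => ?_) i h
      rcases eq_or_ne j k1 with h2 | h2
      · rw [h2]; exact h1
      · rw [hyz j hj h2]; exact dvd_zero z
  obtain ⟨t, γ2, hdet2, hcol2, hmemt, hmv⟩ :=
    phase2 p hirr hpm hinj n hfac k1 hk1 (y 0) (y k1) hab
  have hyeq : (fun k => if k = 0 then y 0 else if k = k1 then y k1 else 0) = y := by
    funext k
    by_cases h1 : k = 0
    · rw [if_pos h1, h1]
    · rw [if_neg h1]
      by_cases h2 : k = k1
      · rw [if_pos h2, h2]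
      · rw [if_neg h2, (hyz k h1 h2)]
  have h5 : γ2.mulVec (cvecA p k1 t) = y := by
    have : cvecA p k1 t
        = (fun k => if k = 0 then 1 else if k = k1 then ∏ i ∈ t, p i else 0) := rfl
    rw [this, hmv, hyeq]
  have hstep := relStep n (cvecA p k1 t) (cvecA_ne p k1 t) γ2 hdet2 hcol2
  rw [embA_congr (mulVec_ne_zero hdet2 (cvecA_ne p k1 t)) hy h5] at hstep
  exact ⟨t, Relation.EqvGen.trans _ _ _ (Relation.EqvGen.rel _ _ hrel)
    (Relation.EqvGen.trans _ _ _ hchain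
      (Relation.EqvGen.symm _ _ (Relation.EqvGen.rel _ _ hstep)))⟩

lemma phiCvec {s : ℕ} (p : Fin s → Polynomial F) (hirr : ∀ i, Irreducible (p i))
    (hpm : ∀ i, (p i).Monic) (hinj : Function.Injective p) (k1 : Fin r) (hk1 : k1 ≠ 0)
    (t : Finset (Fin s)) (i : Fin s) :
    phi (p i) (cvec p k1 t).1 ↔ i ∈ t := by
  have hp : Prime (p i) := UniqueFactorizationMonoid.irreducible_iff_prime.mp (hirr i)
  have hp1 : ¬ p i ∣ (1 : Polynomial F) := fun h => hp.not_unit (isUnit_of_dvd_one h)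
  have hv0 : (cvec p k1 t).1 0 = 1 := by
    simp [cvec, embA, cvecA]
  have hv1 : (cvec p k1 t).1 k1 = ι F (∏ j ∈ t, p j) := by
    simp [cvec, embA, cvecA, hk1]
  constructor
  · rintro ⟨h0, hloc⟩
    obtain ⟨y, ⟨a, b, hb, hyab⟩, hy⟩ := hloc k1 hk1
    rw [hv1, hv0, mul_one] at hy
    have h2 : (∏ j ∈ t, p j) * b = p i * a := by
      apply ι_inj
      rw [_root_.map_mul, _root_.map_mul, hy, mul_assoc, hyab]
    have h3 : p i ∣ (∏ j ∈ t, p j) * b := Dvd.intro a h2.symm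
    rcases hp.dvd_mul.1 h3 with h4 | h4
    · obtain ⟨j, hj, hdvd⟩ := hp.exists_mem_finset_dvd h4
      have hij : i = j := hinj (Polynomial.eq_of_monic_of_associated (hpm i) (hpm j)
        ((hirr i).associated_of_dvd (hirr j) hdvd))
      rw [hij]
      exact hj
    · exact absurd h4 hb
  · intro hit
    refine ⟨by rw [hv0]; exact one_ne_zero, fun k hk => ?_⟩
    by_cases h2 : k = k1
    · refine ⟨ι F (∏ j ∈ t.erase i, p j), IntP.ofA _ hp1 _, ?_⟩
      rw [h2, hv1, hv0, mul_one, ← _root_.map_mul, Finset.mul_prod_erase _ _ hit]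
    · refine ⟨0, IntP.zero _ hp1, ?_⟩
      have : (cvec p k1 t).1 k = 0 := by
        simp [cvec, embA, cvecA, hk, h2]
      rw [this, hv0]
      ring

end Main
end Stmt5


/-- for a square-free monic `𝔫 ∈ F_q[T]` with `s` distinct prime factors and
`r ≥ 2`, the number of orbits of `Γ_0^r(𝔫)` on `P^{r−1}(F_q(T))` is `2^s`. -/
theorem stmt_5 {F : Type*} [Field F] [Fintype F] (r : ℕ) [NeZero r] (hr : 2 ≤ r)
    (n : Polynomial F) (hmon : n.Monic) (hsf : Squarefree n) (s : ℕ)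
    (p : Fin s → Polynomial F) (hirr : ∀ i, Irreducible (p i)) (hpm : ∀ i, (p i).Monic)
    (hinj : Function.Injective p) (hfac : n = ∏ i, p i) :
    Nat.card (Quot (GammaZeroRel r n)) = 2 ^ s := by
  classical
  open Stmt5 in
  have hk1lt : 1 < r := lt_of_lt_of_le one_lt_two hr
  set k1 : Fin r := ⟨1, hk1lt⟩ with hk1def
  have hk1 : k1 ≠ 0 := by
    intro h
    have := congrArg Fin.val h
    simp [hk1def] at this
  have hprime : ∀ i, Prime (p i) :=
    fun i => UniqueFactorizationMonoid.irreducible_iff_prime.mp (hirr i)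
  have hpn : ∀ i, p i ∣ n :=
    fun i => hfac ▸ Finset.dvd_prod_of_mem p (Finset.mem_univ i)
  have wd : ∀ v w : {v : Fin r → RatFunc F // v ≠ 0}, GammaZeroRel r n v w →
      (fun i => decide (Stmt5.phi (p i) v.1)) = (fun i => decide (Stmt5.phi (p i) w.1)) := by
    intro v w h
    funext i
    exact decide_eq_decide.mpr
      ⟨Stmt5.phi_inv n (hprime i) (hpn i) h, Stmt5.phi_inv n (hprime i) (hpn i) (Stmt5.rel_symm n h)⟩
  set Φ : Quot (GammaZeroRel r n) → (Fin s → Bool) :=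
    Quot.lift (fun v : {v : Fin r → RatFunc F // v ≠ 0} =>
      fun i => decide (Stmt5.phi (p i) v.1)) wd with hΦ
  have hbij : Function.Bijective Φ := by
    constructor
    · intro q1 q2 hq
      obtain ⟨v, rfl⟩ := Quot.exists_rep q1
      obtain ⟨w, rfl⟩ := Quot.exists_rep q2
      obtain ⟨t1, h1⟩ := Stmt5.canon p hirr hpm hinj n hfac k1 hk1 v
      obtain ⟨t2, h2⟩ := Stmt5.canon p hirr hpm hinj n hfac k1 hk1 w
      rw [Quot.eqvGen_sound h1, Quot.eqvGen_sound h2] at hq ⊢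
      have ht : t1 = t2 := by
        ext i
        have h3 := congrFun hq i
        have h4 : Stmt5.phi (p i) (Stmt5.cvec p k1 t1).1
            ↔ Stmt5.phi (p i) (Stmt5.cvec p k1 t2).1 := decide_eq_decide.mp h3
        rw [Stmt5.phiCvec p hirr hpm hinj k1 hk1 t1 i,
          Stmt5.phiCvec p hirr hpm hinj k1 hk1 t2 i] at h4
        exact h4
      rw [ht]
    · intro ε
      set t : Finset (Fin s) := Finset.univ.filter (fun i => ε i = true) with htdef
      refine ⟨Quot.mk _ (Stmt5.cvec p k1 t), ?_⟩
      funext i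
      have h1 : Stmt5.phi (p i) (Stmt5.cvec p k1 t).1 ↔ (ε i = true) :=
        (Stmt5.phiCvec p hirr hpm hinj k1 hk1 t i).trans (by simp [htdef])
      calc decide (Stmt5.phi (p i) (Stmt5.cvec p k1 t).1)
          = decide (ε i = true) := decide_eq_decide.mpr h1
        _ = ε i := by cases ε i <;> simp
  rw [Nat.card_eq_of_bijective Φ hbij, Nat.card_fun]
  simp [Nat.card_eq_fintype_card]
end

section
/- Let K be a non-archimedean local field with ring of integers O, uniformizer π, and residue field of size q. The matrices { ((u_s | 0), I_{r−s}; I_s, 0) : 1 ≤ s ≤ r, u_s ∈ Mat_{(r−s)×1}(F_q) } form a complete set of representatives of the left cosets of the parahoric subgroup I^1 = {(a b; c d) ∈ GL_r(O) : c ≡ 0 mod π} in GL_r(O). -/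
/-- The representative matrix `((u_s | 0), I_{r−s}; I_s, 0)`, where the column `u_s` over the
residue field is lifted to `O` via a section `σ`. -/
def WRep {O k : Type*} [CommRing O] {r : ℕ} (σ : k → O) (s : ℕ)
    (u : Fin (r - s) → k) : Matrix (Fin r) (Fin r) O :=
  fun j c =>
    if hj : (j : ℕ) < r - s then
      (if (c : ℕ) = 0 then σ (u ⟨j, hj⟩)
       else if (c : ℕ) = s + (j : ℕ) then 1 else 0)
    else (if (c : ℕ) = (j : ℕ) - (r - s) then 1 else 0)

/-- Explicit inverse of `WRep`. -/
def WInv {O k : Type*} [CommRing O] {r : ℕ} (σ : k → O) (s : ℕ)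
    (u : Fin (r - s) → k) : Matrix (Fin r) (Fin r) O :=
  fun i c =>
    if (i : ℕ) < s then (if (c : ℕ) = (i : ℕ) + (r - s) then 1 else 0)
    else if h : (i : ℕ) - s < r - s then
      (if (c : ℕ) = (i : ℕ) - s then 1 else 0)
        - (if (c : ℕ) = r - s then σ (u ⟨(i : ℕ) - s, h⟩) else 0)
    else 0

theorem WRep_mul_WInv {O k : Type*} [CommRing O] {r : ℕ} (σ : k → O) (s : ℕ)
    (hs1 : 1 ≤ s) (hsr : s ≤ r) (u : Fin (r - s) → k) :
    WRep σ s u * WInv σ s u = (1 : Matrix (Fin r) (Fin r) O) := by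
  have hr : 0 < r := lt_of_lt_of_le hs1 hsr
  ext a b
  have hav := a.isLt
  have hbv := b.isLt
  rw [Matrix.mul_apply, Matrix.one_apply]
  by_cases ha : (a : ℕ) < r - s
  · have hsa : s + (a : ℕ) < r := by omega
    rw [Finset.sum_eq_add_of_mem (⟨0, hr⟩ : Fin r) (⟨s + (a : ℕ), hsa⟩ : Fin r)
      (Finset.mem_univ _) (Finset.mem_univ _) (by simp [Fin.ext_iff]; omega) ?_]
    · simp only [WRep, WInv, dif_pos ha, Fin.val_mk]
      rw [if_pos trivial, if_neg (by omega : ¬ s + (a:ℕ) = 0), if_pos trivial,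
        if_pos (by omega : (0:ℕ) < s),
        if_neg (by omega : ¬ s + (a:ℕ) < s), dif_pos (by omega : s + (a:ℕ) - s < r - s)]
      have hidx : (⟨s + (a:ℕ) - s, by omega⟩ : Fin (r - s)) = ⟨a, ha⟩ := by
        simp [Fin.ext_iff]
      rw [hidx]
      simp only [Fin.ext_iff, Fin.val_mk, Nat.add_sub_cancel_left, zero_add]
      split_ifs <;> first | omega | ring
    · intro c _ hc
      have h1 : (c : ℕ) ≠ 0 := fun h => hc.1 (Fin.ext h)
      have h2 : (c : ℕ) ≠ s + (a : ℕ) := fun h => hc.2 (Fin.ext h)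
      simp only [WRep, dif_pos ha, if_neg h1, if_neg h2, zero_mul]
  · have hbd : (a : ℕ) - (r - s) < r := by omega
    rw [Finset.sum_eq_single_of_mem (⟨(a : ℕ) - (r - s), hbd⟩ : Fin r)
      (Finset.mem_univ _) ?_]
    · simp only [WRep, WInv, dif_neg ha, Fin.val_mk]
      rw [if_pos trivial, if_pos (by omega : (a:ℕ) - (r - s) < s)]
      have : (a : ℕ) - (r - s) + (r - s) = (a : ℕ) := by omega
      rw [this, one_mul]
      simp only [Fin.ext_iff]
      split_ifs <;> first | rfl | omega
    · intro c _ hc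
      have h1 : (c : ℕ) ≠ (a : ℕ) - (r - s) := fun h => hc (Fin.ext h)
      simp only [WRep, dif_neg ha, if_neg h1, zero_mul]

/-- for a non-archimedean local field with ring of integers `O`, uniformizer
`π` and finite residue field `F_q`, the matrices `((u_s | 0), I_{r−s}; I_s, 0)` with
`1 ≤ s ≤ r` and `u_s ∈ Mat_{(r−s)×1}(F_q)` form a complete set of representatives of the
left cosets of `I^1 = {(a b; c d) ∈ GL_r(O) : c ≡ 0 mod π}` in `GL_r(O)`: every
`g ∈ GL_r(O)` is `W·h` with `h ∈ I^1` for a unique representative `W`. -/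
theorem stmt_7 {O : Type*} [CommRing O] [IsDomain O] [IsDiscreteValuationRing O]
    (π : O) (hπ : Irreducible π) (q : ℕ) [Fintype (IsLocalRing.ResidueField O)]
    (hq : Fintype.card (IsLocalRing.ResidueField O) = q)
    (σ : IsLocalRing.ResidueField O → O)
    (hσ : ∀ x, IsLocalRing.residue O (σ x) = x)
    (r : ℕ) [NeZero r] (g : Matrix (Fin r) (Fin r) O) (hg : IsUnit g.det) :
    ∃! p : Σ s : Fin r, Fin (r - ((s : ℕ) + 1)) → IsLocalRing.ResidueField O,
      ∃ h : Matrix (Fin r) (Fin r) O, IsUnit h.det ∧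
        (∀ i : Fin r, i ≠ 0 → h i 0 ∈ Ideal.span {π}) ∧
        g = WRep σ ((p.1 : ℕ) + 1) p.2 * h := by
  classical
  have hr : 0 < r := Nat.pos_of_ne_zero (NeZero.ne r)
  set ρ := IsLocalRing.residue O with hρdef
  set v : Fin r → IsLocalRing.ResidueField O := fun j => ρ (g j 0) with hvdef
  -- v is not identically zero
  have hvne : ∃ j, v j ≠ 0 := by
    by_contra hvz
    push_neg at hvz
    have hdet0 : (g.map ρ).det = 0 :=
      Matrix.det_eq_zero_of_column_eq_zero 0 fun i => hvz i
    have hdu : IsUnit (g.map ρ).det := by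
      rw [← RingHom.mapMatrix_apply, ← RingHom.map_det]; exact hg.map ρ
    rw [hdet0] at hdu
    simp at hdu
  -- the largest index where v is nonzero
  obtain ⟨m, hm, hmax⟩ : ∃ m : Fin r, v m ≠ 0 ∧ ∀ j : Fin r, (m : ℕ) < (j : ℕ) → v j = 0 := by
    obtain ⟨j0, hj0⟩ := hvne
    set T : Finset (Fin r) := Finset.univ.filter (fun j => v j ≠ 0) with hT
    have hTne : T.Nonempty := ⟨j0, by simp [hT, hj0]⟩
    refine ⟨T.max' hTne, ?_, ?_⟩
    · have := T.max'_mem hTne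
      simp [hT] at this; exact this
    · intro j hj
      by_contra hvj
      have hjT : j ∈ T := by simp [hT, hvj]
      have := Finset.le_max' T j hjT
      rw [Fin.le_def] at this; omega
  have hmv := m.isLt
  -- residue of entries of h below the corner vanishes
  have hres0 : ∀ (h : Matrix (Fin r) (Fin r) O), (∀ i : Fin r, i ≠ 0 → h i 0 ∈ Ideal.span {π}) →
      ∀ x : Fin r, x ≠ 0 → ρ (h x 0) = 0 := by
    intro h hbelow x hx
    rw [hρdef, IsLocalRing.residue_eq_zero_iff, Irreducible.maximalIdeal_eq hπ]
    exact hbelow x hx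
  -- forward: any representation constrains v
  have fwd : ∀ (s : ℕ) (hs1 : 1 ≤ s) (hsr : s ≤ r) (u : Fin (r - s) → IsLocalRing.ResidueField O)
      (h : Matrix (Fin r) (Fin r) O), IsUnit h.det →
      (∀ i : Fin r, i ≠ 0 → h i 0 ∈ Ideal.span {π}) →
      g = WRep σ s u * h →
      v ⟨r - s, by omega⟩ ≠ 0 ∧ (∀ j : Fin r, r - s < (j : ℕ) → v j = 0) ∧
        (∀ (j : ℕ) (hj : j < r - s), v ⟨j, by omega⟩ = v ⟨r - s, by omega⟩ * u ⟨j, hj⟩) := by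
    intro s hs1 hsr u h hdet hbelow hge
    have hρ0 := hres0 h hbelow
    have hcol : ∀ j : Fin r, v j = ρ (WRep σ s u j 0) * ρ (h 0 0) := by
      intro j
      show ρ (g j 0) = _
      rw [hge, Matrix.mul_apply, map_sum,
        Finset.sum_eq_single_of_mem (0 : Fin r) (Finset.mem_univ _) ?_]
      · rw [map_mul]
      · intro x _ hx
        rw [map_mul, hρ0 x hx, mul_zero]
    have hc0 : ρ (h 0 0) ≠ 0 := by
      intro hc
      have hdm : IsUnit ((h.map ρ).det) := by
        rw [← RingHom.mapMatrix_apply, ← RingHom.map_det]; exact hdet.map ρ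
      rw [Matrix.det_eq_zero_of_column_eq_zero 0 (fun i => ?_)] at hdm
      · simp at hdm
      · by_cases hi : i = 0
        · subst hi; exact hc
        · exact hρ0 i hi
    have hW0 : ∀ j : Fin r, ρ (WRep σ s u j 0) =
        (if hj : (j : ℕ) < r - s then u ⟨j, hj⟩ else if (j : ℕ) = r - s then 1 else 0) := by
      intro j
      have hjv := j.isLt
      simp only [WRep]
      by_cases hj : (j : ℕ) < r - s
      · rw [dif_pos hj, dif_pos hj]
        rw [if_pos (by simp : ((0 : Fin r) : ℕ) = 0), hσ]
      · rw [dif_neg hj, dif_neg hj]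
        by_cases hj2 : (j : ℕ) = r - s
        · rw [if_pos (by simp; omega), if_pos hj2, map_one]
        · rw [if_neg (by simp; omega), if_neg hj2, map_zero]
    have hcorner : v ⟨r - s, by omega⟩ = ρ (h 0 0) := by
      rw [hcol, hW0, dif_neg (by simp), if_pos (by simp), one_mul]
    refine ⟨?_, ?_, ?_⟩
    · rw [hcorner]; exact hc0
    · intro j hj
      rw [hcol, hW0, dif_neg (by omega), if_neg (by omega), zero_mul]
    · intro j hj
      rw [hcol, hW0, dif_pos (by simpa using hj), hcorner]
      ring
  -- backward: a suitable v-profile yields a representation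
  have bwd : ∀ (s : ℕ) (hs1 : 1 ≤ s) (hsr : s ≤ r) (u : Fin (r - s) → IsLocalRing.ResidueField O),
      (∀ j : Fin r, r - s < (j : ℕ) → v j = 0) →
      (∀ (j : ℕ) (hj : j < r - s), v ⟨j, by omega⟩ = v ⟨r - s, by omega⟩ * u ⟨j, hj⟩) →
      ∃ h : Matrix (Fin r) (Fin r) O, IsUnit h.det ∧
        (∀ i : Fin r, i ≠ 0 → h i 0 ∈ Ideal.span {π}) ∧ g = WRep σ s u * h := by
    intro s hs1 hsr u hhigh hlow
    have hWV := WRep_mul_WInv σ s hs1 hsr u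
    have hVW : WInv σ s u * WRep σ s u = 1 := mul_eq_one_comm.mp hWV
    refine ⟨WInv σ s u * g, ?_, ?_, ?_⟩
    · rw [Matrix.det_mul]
      exact (IsUnit.of_mul_eq_one _ (by rw [← Matrix.det_mul, hVW, Matrix.det_one])).mul hg
    · intro i hi
      have hiv := i.isLt
      have hi0 : (i : ℕ) ≠ 0 := fun hh => hi (Fin.ext (by simp [hh]))
      rw [← Irreducible.maximalIdeal_eq hπ, ← IsLocalRing.residue_eq_zero_iff]
      show ρ ((WInv σ s u * g) i 0) = 0
      rw [Matrix.mul_apply, map_sum]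
      by_cases his : (i : ℕ) < s
      · rw [Finset.sum_eq_single_of_mem (⟨(i : ℕ) + (r - s), by omega⟩ : Fin r)
          (Finset.mem_univ _) ?_]
        · rw [map_mul]
          have h1 : WInv σ s u i ⟨(i : ℕ) + (r - s), by omega⟩ = 1 := by
            simp only [WInv, if_pos his, Fin.val_mk, if_true, eq_self_iff_true]
          rw [h1, map_one, one_mul]
          exact hhigh _ (by simp only [Fin.val_mk]; omega)
        · intro c _ hc
          have h1 : WInv σ s u i c = 0 := by
            simp only [WInv, if_pos his]
            rw [if_neg (fun hh => hc (Fin.ext hh))]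
          rw [h1, zero_mul, map_zero]
      · have his2 : (i : ℕ) - s < r - s := by omega
        rw [Finset.sum_eq_add_of_mem (⟨(i : ℕ) - s, by omega⟩ : Fin r)
          (⟨r - s, by omega⟩ : Fin r) (Finset.mem_univ _) (Finset.mem_univ _)
          (by simp [Fin.ext_iff]; omega) ?_]
        · have h1 : WInv σ s u i ⟨(i : ℕ) - s, by omega⟩ = 1 := by
            simp only [WInv, if_neg his, dif_pos his2, Fin.val_mk]
            rw [if_pos trivial, if_neg (by omega : ¬ (i : ℕ) - s = r - s), sub_zero]
          have h2 : WInv σ s u i ⟨r - s, by omega⟩ = - σ (u ⟨(i : ℕ) - s, his2⟩) := by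
            simp only [WInv, if_neg his, dif_pos his2, Fin.val_mk]
            rw [if_neg (by omega : ¬ r - s = (i : ℕ) - s), if_pos trivial, zero_sub]
          rw [h1, h2, one_mul, map_mul, map_neg, hσ]
          have h3 : ρ (g ⟨(i : ℕ) - s, by omega⟩ 0) = v ⟨(i : ℕ) - s, by omega⟩ := rfl
          have h4 : ρ (g ⟨r - s, by omega⟩ 0) = v ⟨r - s, by omega⟩ := rfl
          rw [h3, h4, hlow ((i : ℕ) - s) his2]
          ring
        · intro c _ hc
          have h1 : WInv σ s u i c = 0 := by
            simp only [WInv, if_neg his, dif_pos his2]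
            rw [if_neg (fun hh => hc.1 (Fin.ext hh)), if_neg (fun hh => hc.2 (Fin.ext hh)),
              sub_zero]
          rw [h1, zero_mul, map_zero]
    · rw [← Matrix.mul_assoc, hWV, Matrix.one_mul]
  -- existence
  set s₀ : ℕ := r - 1 - (m : ℕ) with hs₀
  have hs₀lt : s₀ < r := by omega
  have hms : r - (s₀ + 1) = (m : ℕ) := by omega
  refine ⟨⟨⟨s₀, hs₀lt⟩, fun j => v ⟨(j : ℕ), lt_of_lt_of_le j.isLt (Nat.sub_le r _)⟩ * (v m)⁻¹⟩,
    ?_, ?_⟩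
  · refine bwd (s₀ + 1) (by omega) (by omega) _ ?_ ?_
    · intro j hj
      exact hmax j (by omega)
    · intro j hj
      have hjm : j < (m : ℕ) := by omega
      have hvm : v ⟨r - (s₀ + 1), by omega⟩ = v m := by
        congr 1; exact Fin.ext hms
      rw [hvm]
      show v ⟨j, _⟩ = v m * (v ⟨j, _⟩ * (v m)⁻¹)
      rw [mul_comm (v m), mul_assoc, inv_mul_cancel₀ hm, mul_one]
  · rintro ⟨s₁, u₁⟩ ⟨h, hdet, hbelow, hge⟩
    have hs₁v := s₁.isLt
    obtain ⟨hA, hB, hC⟩ := fwd ((s₁ : ℕ) + 1) (by omega) (by omega) u₁ h hdet hbelow hge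
    have hm1 : r - ((s₁ : ℕ) + 1) = (m : ℕ) := by
      have h1 : ¬ ((m : ℕ) < r - ((s₁ : ℕ) + 1)) := fun hlt => hA (hmax _ (by simpa using hlt))
      have h2 : ¬ (r - ((s₁ : ℕ) + 1) < (m : ℕ)) := fun hlt => hm (hB m (by simpa using hlt))
      omega
    have hs : s₁ = (⟨s₀, hs₀lt⟩ : Fin r) := Fin.ext (by simp; omega)
    subst hs
    refine congrArg (Sigma.mk _) (funext fun j => ?_)
    have hj' : (j : ℕ) < r - (s₀ + 1) := j.isLt
    have hCj := hC (j : ℕ) hj'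
    have hvm : v ⟨r - (s₀ + 1), by omega⟩ = v m := by
      congr 1; exact Fin.ext hms
    rw [hvm] at hCj
    have hju : u₁ ⟨(j : ℕ), hj'⟩ = u₁ j := by congr 1
    rw [hju] at hCj
    show u₁ j = v ⟨(j : ℕ), _⟩ * (v m)⁻¹
    rw [hCj, mul_comm (v m), mul_assoc, mul_inv_cancel₀ hm, mul_one]
end

section
/- Let K be a non-archimedean local field with uniformizer π. Then GL_r(K) decomposes as a disjoint union P(K)·K^×·I^1 ⊔ P(K)·w·K^×·I^1, where P(K) is the mirabolic subgroup of matrices (1 b; 0 d) with d ∈ GL_{r−1}(K), w is the permutation matrix (0 I_{r−1}; 1 0), and I^1 is the parahoric subgroup of GL_r(O) of matrices whose below-diagonal first-column entries lie in πO. In particular, w ∉ P(K)·K^×·I^1. -/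
section

variable {O K : Type*} [CommRing O] [IsDomain O] [IsDiscreteValuationRing O]
  [Field K] [Algebra O K] [IsFractionRing O K] {r : ℕ} [NeZero r]

/-- The mirabolic subgroup `P(K)` of matrices `(1 b; 0 d)` with `d ∈ GL_{r−1}(K)`. -/
def MirabolicMem (p : Matrix (Fin r) (Fin r) K) : Prop :=
  p 0 0 = 1 ∧ (∀ i : Fin r, i ≠ 0 → p i 0 = 0) ∧ IsUnit p.det

/-- The parahoric subgroup `I^1 ⊂ GL_r(O)` (viewed inside `GL_r(K)`): integral invertible
matrices whose first-column entries below the top lie in `πO`. -/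
def ParahoricMem (π : O) (h : Matrix (Fin r) (Fin r) K) : Prop :=
  ∃ H : Matrix (Fin r) (Fin r) O,
    (∀ i j, h i j = algebraMap O K (H i j)) ∧ IsUnit H.det ∧
      ∀ i : Fin r, i ≠ 0 → H i 0 ∈ Ideal.span {π}

/-- The permutation matrix `w = (0 I_{r−1}; 1 0)`. -/
def Wperm : Matrix (Fin r) (Fin r) K :=
  fun i j =>
    if (i : ℕ) + 1 = r then (if (j : ℕ) = 0 then 1 else 0)
    else (if (j : ℕ) = (i : ℕ) + 1 then 1 else 0)

/-- Membership in the double coset `P(K)·K^×·I^1`. -/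
def InPKI (π : O) (g : Matrix (Fin r) (Fin r) K) : Prop :=
  ∃ (p h : Matrix (Fin r) (Fin r) K) (z : K), MirabolicMem p ∧ z ≠ 0 ∧
    ParahoricMem π h ∧ g = p * (z • h)

/-- Membership in the double coset `P(K)·w·K^×·I^1`. -/
def InPwKI (π : O) (g : Matrix (Fin r) (Fin r) K) : Prop :=
  ∃ (p h : Matrix (Fin r) (Fin r) K) (z : K), MirabolicMem p ∧ z ≠ 0 ∧
    ParahoricMem π h ∧ g = p * Wperm * (z • h)

open Matrix

lemma aux_span_eq (π : O) (hπ : Irreducible π) :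
    Ideal.span {π} = IsLocalRing.maximalIdeal O :=
  ((IsDiscreteValuationRing.irreducible_iff_uniformizer π).mp hπ).symm

lemma aux_mem_span_unit (π : O) (hπ : Irreducible π) (x : O) :
    x ∈ Ideal.span {π} ↔ ¬ IsUnit x := by
  rw [aux_span_eq π hπ, ← IsLocalRing.notMem_maximalIdeal, not_not]

lemma aux_mem_span_residue (π : O) (hπ : Irreducible π) (x : O) :
    x ∈ Ideal.span {π} ↔ IsLocalRing.residue O x = 0 := by
  rw [aux_span_eq π hπ, IsLocalRing.residue_eq_zero_iff]

lemma aux_mapInv {S : Type*} [CommRing S] (f : O →+* S) (H : Matrix (Fin r) (Fin r) O)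
    (hdet : IsUnit H.det) : (f.mapMatrix H)⁻¹ = f.mapMatrix H⁻¹ :=
  Matrix.inv_eq_right_inv (by
    rw [← _root_.map_mul, Matrix.mul_nonsing_inv _ hdet, _root_.map_one])

lemma aux_fin_one_ne_zero (hr : 2 ≤ r) : (1 : Fin r) ≠ 0 := by
  have h1 : ((1 : Fin r) : ℕ) ≠ ((0 : Fin r) : ℕ) := by
    rw [Fin.val_one', Fin.val_zero, Nat.mod_eq_of_lt (by omega)]
    omega
  exact fun h => h1 (congrArg Fin.val h)

lemma aux_inv_col0 (π : O) (hπ : Irreducible π) {H : Matrix (Fin r) (Fin r) O}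
    (hdet : IsUnit H.det) (hcol : ∀ i : Fin r, i ≠ 0 → H i 0 ∈ Ideal.span {π}) :
    IsUnit (H⁻¹).det ∧ IsUnit (H⁻¹ 0 0) ∧
      ∀ i : Fin r, i ≠ 0 → H⁻¹ i 0 ∈ Ideal.span {π} := by
  have hHinv : IsUnit (H⁻¹).det := Matrix.isUnit_nonsing_inv_det _ hdet
  set k := IsLocalRing.ResidueField O with hk
  set φ := IsLocalRing.residue O with hφ
  set M : Matrix (Fin r) (Fin r) k := φ.mapMatrix H with hM
  set e0 : Fin r → k := Pi.single 0 1 with he0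
  have hMdet : M.det ≠ 0 := by
    have hu : IsUnit M.det := by rw [hM, ← RingHom.map_det]; exact hdet.map φ
    exact hu.ne_zero
  have hcol0 : ∀ i : Fin r, i ≠ 0 → M i 0 = 0 := fun i hi =>
    (aux_mem_span_residue π hπ _).mp (hcol i hi)
  have hcne : M 0 0 ≠ 0 := by
    intro h0
    apply hMdet
    apply Matrix.det_eq_zero_of_column_eq_zero 0
    intro i
    by_cases hi : i = 0
    · rw [hi, h0]
    · exact hcol0 i hi
  have hMe : M *ᵥ e0 = M 0 0 • e0 := by
    funext i
    rw [he0, Matrix.mulVec_single]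
    by_cases hi : i = 0
    · subst hi; simp
    · simp [hcol0 i hi, Pi.single_apply, hi]
  have hNe : M⁻¹ *ᵥ e0 = (M 0 0)⁻¹ • e0 := by
    have h1 : M *ᵥ ((M 0 0)⁻¹ • e0) = e0 := by
      rw [Matrix.mulVec_smul, hMe, smul_smul, inv_mul_cancel₀ hcne, one_smul]
    calc M⁻¹ *ᵥ e0 = M⁻¹ *ᵥ (M *ᵥ ((M 0 0)⁻¹ • e0)) := by rw [h1]
    _ = (M⁻¹ * M) *ᵥ ((M 0 0)⁻¹ • e0) := Matrix.mulVec_mulVec _ _ _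
    _ = (M 0 0)⁻¹ • e0 := by
        rw [Matrix.nonsing_inv_mul _ (isUnit_iff_ne_zero.mpr hMdet), Matrix.one_mulVec]
  have hNentry : ∀ i, φ (H⁻¹ i 0) = ((M 0 0)⁻¹ • e0) i := by
    intro i
    have h2 : φ.mapMatrix H⁻¹ *ᵥ e0 = (M 0 0)⁻¹ • e0 := by
      rw [← aux_mapInv φ H hdet, hM]; exact hNe
    have h3 := congrFun h2 i
    rw [he0, Matrix.mulVec_single] at h3
    simpa using h3
  refine ⟨hHinv, ?_, ?_⟩
  · have hnm : ¬ (H⁻¹ 0 0 ∈ Ideal.span {π}) := by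
      rw [aux_mem_span_residue π hπ, hNentry 0]
      simp [he0, inv_ne_zero hcne]
    rw [aux_mem_span_unit π hπ] at hnm
    exact not_not.mp hnm
  · intro i hi
    rw [aux_mem_span_residue π hπ, hNentry i]
    simp [he0, Pi.single_apply, hi]

lemma aux_inv_col1 (π : O) (hπ : Irreducible π) (hr : 2 ≤ r) {H : Matrix (Fin r) (Fin r) O}
    (hdet : IsUnit H.det) (hcol : ∀ i : Fin r, i ≠ 0 → H i 0 ∈ Ideal.span {π}) :
    ∃ i : Fin r, i ≠ 0 ∧ IsUnit (H⁻¹ i 1) := by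
  by_contra hcon
  push_neg at hcon
  have h10 : (1 : Fin r) ≠ 0 := aux_fin_one_ne_zero hr
  set k := IsLocalRing.ResidueField O with hk
  set φ := IsLocalRing.residue O with hφ
  set N : Matrix (Fin r) (Fin r) k := φ.mapMatrix H⁻¹ with hN
  have hNdet : N.det ≠ 0 := by
    have hu : IsUnit N.det := by
      rw [hN, ← RingHom.map_det]
      exact (Matrix.isUnit_nonsing_inv_det _ hdet).map φ
    exact hu.ne_zero
  have hc0 : ∀ i : Fin r, i ≠ 0 → N i 0 = 0 := fun i hi =>
    (aux_mem_span_residue π hπ _).mp ((aux_inv_col0 π hπ hdet hcol).2.2 i hi)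
  have hc1 : ∀ i : Fin r, i ≠ 0 → N i 1 = 0 := fun i hi =>
    (aux_mem_span_residue π hπ _).mp ((aux_mem_span_unit π hπ _).mpr (hcon i hi))
  have hrow0 : Nᵀ 0 = Pi.single (0 : Fin r) (N 0 0) := by
    funext j
    by_cases hj : j = 0
    · subst hj; simp
    · simp [Matrix.transpose_apply, hc0 j hj, Pi.single_apply, hj]
  have hrow1 : Nᵀ 1 = Pi.single (0 : Fin r) (N 0 1) := by
    funext j
    by_cases hj : j = 0
    · subst hj; simp
    · simp [Matrix.transpose_apply, hc1 j hj, Pi.single_apply, hj]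
  apply hNdet
  rw [← Matrix.det_transpose]
  by_cases ha : N 0 0 = 0
  · apply Matrix.det_eq_zero_of_row_eq_zero 0
    intro j
    rw [hrow0, ha]
    simp
  · have key := Matrix.det_updateRow_add_smul_self Nᵀ h10 (-(N 0 1 * (N 0 0)⁻¹))
    rw [← key]
    apply Matrix.det_eq_zero_of_row_eq_zero 1
    intro j
    rw [Matrix.updateRow_self, hrow0, hrow1]
    by_cases hj : j = 0
    · subst hj
      simp only [Pi.add_apply, Pi.smul_apply, Pi.single_eq_same, smul_eq_mul]
      rw [neg_mul, mul_assoc, inv_mul_cancel₀ ha, mul_one, add_neg_cancel]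
    · simp [Pi.single_apply, hj]

lemma aux_exists_primitive (v : Fin r → K) (hv : v ≠ 0) :
    ∃ (z : K) (w : Fin r → O), z ≠ 0 ∧ (∀ i, v i = z * algebraMap O K (w i)) ∧
      ∃ j, IsUnit (w j) := by
  obtain ⟨b, hb⟩ := IsLocalization.exist_integer_multiples_of_finite (nonZeroDivisors O) v
  choose u hu using hb
  have hinj := IsFractionRing.injective O K
  have hbK : algebraMap O K (b : O) ≠ 0 := by
    intro h
    exact nonZeroDivisors.coe_ne_zero b (hinj (by simpa using h))
  have hune : ∃ i, u i ≠ 0 := by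
    by_contra h; push_neg at h
    apply hv; funext i
    have h2 := hu i
    rw [h i, map_zero, Algebra.smul_def] at h2
    exact ((mul_eq_zero.mp h2.symm).resolve_left hbK)
  obtain ⟨i0, hi0⟩ := hune
  obtain ⟨d, hd⟩ := (IsPrincipalIdealRing.principal (Ideal.span (Set.range u))).principal
  rw [Ideal.submodule_span_eq] at hd
  have hdvd : ∀ i, d ∣ u i := by
    intro i
    have h3 : u i ∈ Ideal.span (Set.range u) := Ideal.subset_span ⟨i, rfl⟩
    rw [hd] at h3
    exact Ideal.mem_span_singleton.mp h3
  choose w hw using hdvd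
  have hdI : d ∈ Ideal.span (Set.range u) := by
    rw [hd]; exact Ideal.mem_span_singleton_self d
  obtain ⟨c, hc⟩ := Ideal.mem_span_range_iff_exists_fun.mp hdI
  have hdne : d ≠ 0 := fun h => hi0 (by rw [hw i0, h, zero_mul])
  have h1 : ∑ i, c i * w i = 1 := by
    apply mul_left_cancel₀ hdne
    rw [mul_one, Finset.mul_sum]
    calc ∑ i, d * (c i * w i) = ∑ i, c i * u i :=
          Finset.sum_congr rfl fun i _ => by rw [hw i]; ring
    _ = d := hc
  have hj : ∃ j, IsUnit (w j) := by
    by_contra h; push_neg at h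
    have hmem : (1 : O) ∈ IsLocalRing.maximalIdeal O := by
      rw [← h1]
      exact Ideal.sum_mem _ fun i _ =>
        Ideal.mul_mem_left _ _ ((IsLocalRing.mem_maximalIdeal _).mpr
          (mem_nonunits_iff.mpr (h i)))
    exact (IsLocalRing.maximalIdeal.isMaximal O).ne_top
      (Ideal.eq_top_of_isUnit_mem _ hmem isUnit_one)
  refine ⟨algebraMap O K d / algebraMap O K (b : O), w, ?_, ?_, hj⟩
  · exact div_ne_zero (fun h => hdne (hinj (by simpa using h))) hbK
  · intro i
    have h2 : algebraMap O K (b : O) * v i = algebraMap O K d * algebraMap O K (w i) := by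
      rw [← _root_.map_mul, ← hw i, hu i, Algebra.smul_def]
    rw [div_mul_eq_mul_div, eq_div_iff hbK, mul_comm (v i), h2]

lemma aux_unique {z z' : K} {w w' : Fin r → O} (hz : z ≠ 0)
    (h : ∀ i, z * algebraMap O K (w i) = z' * algebraMap O K (w' i))
    (hw : ∃ j, IsUnit (w j)) (hw' : ∃ j, IsUnit (w' j)) :
    ∃ ε : O, IsUnit ε ∧ ∀ i, w i = ε * w' i := by
  obtain ⟨j, hj⟩ := hw
  obtain ⟨j', hj'⟩ := hw'
  have hinj := IsFractionRing.injective O K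
  obtain ⟨a', ha'⟩ := hj'.exists_right_inv
  obtain ⟨b', hb'⟩ := hj.exists_right_inv
  have fmul : ∀ x y : O, algebraMap O K (x * y) = algebraMap O K x * algebraMap O K y :=
    fun x y => _root_.map_mul (algebraMap O K) x y
  have fone : algebraMap O K (1 : O) = 1 := _root_.map_one (algebraMap O K)
  have e1 : z' = z * algebraMap O K (w j' * a') := by
    have h0 := h j'
    have h3 : z' * algebraMap O K (w' j' * a') = z * algebraMap O K (w j' * a') := by
      rw [fmul, fmul, ← mul_assoc, ← mul_assoc, ← h0]
    rwa [ha', fone, mul_one] at h3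
  have e2 : z = z' * algebraMap O K (w' j * b') := by
    have h0 := h j
    have h3 : z * algebraMap O K (w j * b') = z' * algebraMap O K (w' j * b') := by
      rw [fmul, fmul, ← mul_assoc, ← mul_assoc, h0]
    rwa [hb', fone, mul_one] at h3
  have e3 : algebraMap O K ((w j' * a') * (w' j * b')) = algebraMap O K 1 := by
    rw [fone, fmul]
    have h4 : z * (algebraMap O K (w j' * a') * algebraMap O K (w' j * b')) = z * 1 := by
      rw [mul_one, ← mul_assoc, ← e1, ← e2]
    exact mul_left_cancel₀ hz h4
  have hαβ : (w j' * a') * (w' j * b') = 1 := hinj e3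
  refine ⟨w j' * a', IsUnit.of_mul_eq_one _ hαβ, fun i => ?_⟩
  apply hinj
  apply mul_left_cancel₀ hz
  rw [h i, e1]
  simp only [fmul]
  ring

lemma aux_Wcol (hr : 2 ≤ r) :
    (Wperm : Matrix (Fin r) (Fin r) K) *ᵥ Pi.single 1 1 = Pi.single (0 : Fin r) 1 := by
  funext i
  rw [Matrix.mulVec_single]
  have hmod : 1 % r = 1 := Nat.mod_eq_of_lt (by omega)
  have hr1 : ¬ (r = 1) := by omega
  have h1r : ¬ ((1 : ℕ) = r) := by omega
  by_cases hi : (i : ℕ) + 1 = r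
  · have hi0 : i ≠ 0 := by
      intro h
      rw [h, Fin.val_zero] at hi
      omega
    simp [Wperm, hi, hmod, hr1, h1r, Pi.single_apply, hi0]
  · by_cases hi0 : i = 0
    · subst hi0
      simp [Wperm, hi, hmod, hr1, h1r, Fin.val_zero]
    · have hne : ¬ ((1 : ℕ) = (i : ℕ) + 1) := by
        intro h
        apply hi0
        apply Fin.ext
        rw [Fin.val_zero]
        omega
      simp [Wperm, hi, hmod, hr1, h1r, hne, Pi.single_apply, hi0]

lemma aux_Wdet (hr : 2 ≤ r) : IsUnit (Wperm : Matrix (Fin r) (Fin r) K).det := by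
  set σ : Equiv.Perm (Fin r) := Equiv.addRight (1 : Fin r) with hσ
  have hW : (Wperm : Matrix (Fin r) (Fin r) K) = σ.permMatrix K := by
    ext i j
    have hσi : σ i = i + 1 := rfl
    have hval : ((i + 1 : Fin r) : ℕ) = ((i : ℕ) + 1) % r := by
      rw [Fin.add_def, Fin.val_one', Nat.mod_eq_of_lt (show 1 < r by omega)]
    simp only [Wperm, Equiv.Perm.permMatrix, PEquiv.toMatrix_apply, Equiv.toPEquiv_apply,
      Option.mem_def, Option.some.injEq, hσi]
    by_cases hc : (i : ℕ) + 1 = r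
    · have hval0 : ((i + 1 : Fin r) : ℕ) = 0 := by rw [hval, hc, Nat.mod_self]
      by_cases hj : (j : ℕ) = 0
      · have he : i + 1 = j := Fin.ext (by omega)
        simp [hc, hj, he]
      · have he : ¬ (i + 1 = j) := fun h => hj (by rw [← h]; omega)
        simp [hc, hj, he]
    · have hlt : (i : ℕ) + 1 < r := by have := i.isLt; omega
      have hval2 : ((i + 1 : Fin r) : ℕ) = (i : ℕ) + 1 := by rw [hval, Nat.mod_eq_of_lt hlt]
      by_cases hj : (j : ℕ) = (i : ℕ) + 1
      · have he : i + 1 = j := Fin.ext (by omega)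
        simp [hc, hj, he]
      · have he : ¬ (i + 1 = j) := fun h => hj (by rw [← h, hval2])
        simp [hc, hj, he]
  rw [hW, Matrix.det_permutation]
  rcases Int.units_eq_one_or (Equiv.Perm.sign σ) with h | h <;> rw [h] <;> simp

lemma aux_build (π : O) (hπ : Irreducible π) {g : Matrix (Fin r) (Fin r) K}
    (hg : IsUnit g.det) {z₀ : K} (hz₀ : z₀ ≠ 0) {u : Fin r → O}
    (hvu : ∀ i, g⁻¹ i 0 = z₀ * algebraMap O K (u i))
    {H' : Matrix (Fin r) (Fin r) O} (hdet' : IsUnit H'.det)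
    (hcol' : ∀ i : Fin r, i ≠ 0 → H' i 0 ∈ Ideal.span {π}) {c : Fin r}
    (hHu : ∀ i, H' i c = u i)
    {W : Matrix (Fin r) (Fin r) K} (hW : IsUnit W.det)
    (hWc : W *ᵥ Pi.single c 1 = Pi.single (0 : Fin r) 1) :
    ∃ (p h : Matrix (Fin r) (Fin r) K) (z : K),
      MirabolicMem p ∧ z ≠ 0 ∧ ParahoricMem π h ∧ g = p * W * (z • h) := by
  obtain ⟨hd1, hd2, hd3⟩ := aux_inv_col0 π hπ hdet' hcol'
  set f := algebraMap O K with hf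
  set h : Matrix (Fin r) (Fin r) K := f.mapMatrix H'⁻¹ with hh
  have hpar : ParahoricMem π h := ⟨H'⁻¹, fun i j => rfl, hd1, hd3⟩
  have hhdet : IsUnit h.det := by rw [hh, ← RingHom.map_det]; exact hd1.map f
  have hhinv : h⁻¹ = f.mapMatrix H' := Matrix.inv_eq_right_inv (by
    rw [hh, ← _root_.map_mul, Matrix.nonsing_inv_mul _ hdet', _root_.map_one])
  have hz : (z₀⁻¹ : K) ≠ 0 := inv_ne_zero hz₀
  have hzh : IsUnit ((z₀⁻¹ • h).det) := by
    rw [Matrix.det_smul]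
    exact (isUnit_iff_ne_zero.mpr (pow_ne_zero _ hz)).mul hhdet
  have hzhinv : (z₀⁻¹ • h)⁻¹ = z₀ • h⁻¹ := Matrix.inv_eq_right_inv (by
    rw [Matrix.smul_mul, Matrix.mul_smul, Matrix.mul_nonsing_inv _ hhdet, smul_smul,
      inv_mul_cancel₀ hz₀, one_smul])
  set p := g * (z₀⁻¹ • h)⁻¹ * W⁻¹ with hp
  have hWinv : W⁻¹ *ᵥ Pi.single 0 1 = Pi.single c 1 := by
    rw [← hWc, Matrix.mulVec_mulVec, Matrix.nonsing_inv_mul _ hW, Matrix.one_mulVec]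
  have hkey : p *ᵥ Pi.single 0 1 = Pi.single 0 1 := by
    rw [hp, ← Matrix.mulVec_mulVec, ← Matrix.mulVec_mulVec, hWinv, hzhinv,
      Matrix.smul_mulVec, hhinv]
    have h1 : f.mapMatrix H' *ᵥ Pi.single c 1 = fun i => f (u i) := by
      funext i
      rw [Matrix.mulVec_single]
      simp [RingHom.mapMatrix_apply, Matrix.map_apply, hHu i]
    have h2 : (fun i => f (u i)) = z₀⁻¹ • (fun i => g⁻¹ i 0) := by
      funext i
      simp only [Pi.smul_apply, smul_eq_mul, hvu i]
      rw [← mul_assoc, inv_mul_cancel₀ hz₀, one_mul]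
    have h3 : g *ᵥ (fun i => g⁻¹ i 0) = Pi.single 0 1 := by
      have h4 : (fun i => g⁻¹ i 0) = g⁻¹ *ᵥ Pi.single 0 1 := by
        funext i; simp
      rw [h4, Matrix.mulVec_mulVec, Matrix.mul_nonsing_inv _ hg, Matrix.one_mulVec]
    have hzz : z₀ * z₀⁻¹ = 1 := mul_inv_cancel₀ hz₀
    rw [h1, h2, Matrix.mulVec_smul, Matrix.mulVec_smul, h3, smul_smul, hzz, one_smul]
  refine ⟨p, h, z₀⁻¹, ⟨?_, ?_, ?_⟩, hz, hpar, ?_⟩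
  · simpa using congrFun hkey 0
  · intro i hi
    simpa [Pi.single_apply, hi] using congrFun hkey i
  · have e1 : IsUnit (W⁻¹).det := Matrix.isUnit_nonsing_inv_det _ hW
    have e2 : IsUnit ((z₀⁻¹ • h)⁻¹).det := Matrix.isUnit_nonsing_inv_det _ hzh
    rw [hp, Matrix.det_mul, Matrix.det_mul]
    exact (hg.mul e2).mul e1
  · rw [hp, Matrix.mul_assoc (g * (z₀⁻¹ • h)⁻¹) W⁻¹ W, Matrix.nonsing_inv_mul _ hW,
      Matrix.mul_one, Matrix.mul_assoc g _ _, Matrix.nonsing_inv_mul _ hzh, Matrix.mul_one]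

lemma aux_col (π : O) {g W p h : Matrix (Fin r) (Fin r) K} {z : K} {c : Fin r}
    (hW : IsUnit W.det) (hWc : W *ᵥ Pi.single c 1 = Pi.single (0 : Fin r) 1)
    (hg : IsUnit g.det) (hp : MirabolicMem p) (hz : z ≠ 0) (hh : ParahoricMem π h)
    (hgf : g = p * W * (z • h)) :
    ∃ H : Matrix (Fin r) (Fin r) O, IsUnit H.det ∧
      (∀ i : Fin r, i ≠ 0 → H i 0 ∈ Ideal.span {π}) ∧
      ∀ i, g⁻¹ i 0 = z⁻¹ * algebraMap O K (H⁻¹ i c) := by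
  obtain ⟨H, hmap, hdet, hcol⟩ := hh
  set f := algebraMap O K with hf
  have hhH : h = f.mapMatrix H := by
    ext i j; rw [hmap i j]; rfl
  set x : Fin r → K := z⁻¹ • (f.mapMatrix H⁻¹ *ᵥ Pi.single c 1) with hx
  have hgx : g *ᵥ x = Pi.single 0 1 := by
    rw [hgf, hx, ← Matrix.mulVec_mulVec, ← Matrix.mulVec_mulVec]
    have h1 : (z • h) *ᵥ (z⁻¹ • (f.mapMatrix H⁻¹ *ᵥ Pi.single c 1)) = Pi.single c 1 := by
      rw [Matrix.mulVec_smul, Matrix.smul_mulVec, smul_smul, inv_mul_cancel₀ hz, one_smul,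
        Matrix.mulVec_mulVec, hhH, ← _root_.map_mul, Matrix.mul_nonsing_inv _ hdet,
        _root_.map_one, Matrix.one_mulVec]
    rw [h1, hWc]
    funext i
    rw [Matrix.mulVec_single]
    by_cases hi : i = 0
    · subst hi; simp [hp.1]
    · simp [hp.2.1 i hi, Pi.single_apply, hi]
  have hx' : g⁻¹ *ᵥ Pi.single 0 1 = x := by
    rw [← hgx, Matrix.mulVec_mulVec, Matrix.nonsing_inv_mul _ hg, Matrix.one_mulVec]
  refine ⟨H, hdet, hcol, fun i => ?_⟩
  have h6 : g⁻¹ i 0 = x i := by simpa using congrFun hx' i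
  rw [h6, hx]
  simp [Matrix.mulVec_single, RingHom.mapMatrix_apply, Matrix.map_apply]

/-- `GL_r(K) = P(K)·K^×·I^1 ⊔ P(K)·w·K^×·I^1`, a disjoint union; in
particular `w ∉ P(K)·K^×·I^1`. -/
theorem stmt_8 (π : O) (hπ : Irreducible π) (hr : 2 ≤ r) :
    (∀ g : Matrix (Fin r) (Fin r) K, IsUnit g.det →
      (InPKI π g ∨ InPwKI π g) ∧ ¬ (InPKI π g ∧ InPwKI π g)) ∧
    ¬ InPKI π (Wperm : Matrix (Fin r) (Fin r) K) := by
  have hmain : ∀ g : Matrix (Fin r) (Fin r) K, IsUnit g.det →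
      (InPKI π g ∨ InPwKI π g) ∧ ¬ (InPKI π g ∧ InPwKI π g) := by
    intro g hg
    have hginv : IsUnit (g⁻¹).det := Matrix.isUnit_nonsing_inv_det _ hg
    have hvne : (fun i => g⁻¹ i 0) ≠ 0 := by
      intro h0
      exact hginv.ne_zero (Matrix.det_eq_zero_of_column_eq_zero 0 fun i => congrFun h0 i)
    obtain ⟨z₀, w₀, hz₀, hvw, hwj⟩ := aux_exists_primitive (O := O) (fun i => g⁻¹ i 0) hvne
    constructor
    · by_cases hA : ∀ i : Fin r, i ≠ 0 → w₀ i ∈ Ideal.span {π}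
      · left
        obtain ⟨j, hj⟩ := hwj
        have hj0 : j = 0 := by
          by_contra hne
          exact ((aux_mem_span_unit π hπ _).mp (hA j hne)) hj
        subst hj0
        set H' : Matrix (Fin r) (Fin r) O :=
          (1 : Matrix (Fin r) (Fin r) O).updateCol 0 w₀ with hH'
        have hH'c : ∀ i, H' i 0 = w₀ i := fun i => Matrix.updateCol_self
        have hH'det : IsUnit H'.det := by
          have hdet : H'.det = w₀ 0 := by
            rw [hH', ← Matrix.cramer_apply, Matrix.cramer_one]
            rfl
          rw [hdet]; exact hj
        obtain ⟨p, h, z, hp, hz, hpar, heq⟩ :=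
          aux_build π hπ hg hz₀ hvw hH'det
            (fun i hi => by rw [hH'c i]; exact hA i hi) (c := 0) hH'c
            (W := 1) (by simp) (Matrix.one_mulVec _)
        exact ⟨p, h, z, hp, hz, hpar, by rwa [Matrix.mul_one] at heq⟩
      · right
        push_neg at hA
        obtain ⟨j, hj0, hjn⟩ := hA
        have hju : IsUnit (w₀ j) := by
          by_contra hcon
          exact hjn ((aux_mem_span_unit π hπ _).mpr hcon)
        have h10 : (1 : Fin r) ≠ 0 := aux_fin_one_ne_zero hr
        set σ : Equiv.Perm (Fin r) := Equiv.swap 1 j with hσ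
        have hσ0 : σ 0 = 0 := Equiv.swap_apply_of_ne_of_ne (Ne.symm h10) (Ne.symm hj0)
        set B : Matrix (Fin r) (Fin r) O :=
          (1 : Matrix (Fin r) (Fin r) O).updateCol 1 (fun i => w₀ (σ i)) with hB
        set H' : Matrix (Fin r) (Fin r) O := (σ.permMatrix O) * B with hH'
        have hPB : ∀ i k', H' i k' = B (σ i) k' := by
          intro i k'
          rw [hH', show σ.permMatrix O = σ.toPEquiv.toMatrix from rfl,
            PEquiv.toMatrix_toPEquiv_mul]
          rfl
        have hH'c1 : ∀ i, H' i 1 = w₀ i := by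
          intro i
          rw [hPB, hB, Matrix.updateCol_self]
          exact congrArg w₀ (Equiv.swap_apply_self _ _ _)
        have hH'c0 : ∀ i : Fin r, i ≠ 0 → H' i 0 ∈ Ideal.span {π} := by
          intro i hi
          rw [hPB, hB, Matrix.updateCol_ne (Ne.symm h10)]
          have hne : σ i ≠ 0 := fun hcc => hi (σ.injective (by rw [hcc, hσ0]))
          rw [Matrix.one_apply_ne hne]
          exact Ideal.zero_mem _
        have hH'det : IsUnit H'.det := by
          rw [hH', Matrix.det_mul]
          apply IsUnit.mul
          · rw [Matrix.det_permutation]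
            rcases Int.units_eq_one_or (Equiv.Perm.sign σ) with hs | hs <;> rw [hs] <;> simp
          · have hdB : B.det = w₀ (σ 1) := by
              rw [hB, ← Matrix.cramer_apply, Matrix.cramer_one]
              rfl
            rw [hdB, hσ]
            rw [Equiv.swap_apply_left]
            exact hju
        exact aux_build π hπ hg hz₀ hvw hH'det hH'c0 (c := 1) hH'c1
          (aux_Wdet hr) (aux_Wcol hr)
    · rintro ⟨⟨p1, h1, z1, hp1, hz1, hpar1, he1⟩, ⟨p2, h2, z2, hp2, hz2, hpar2, he2⟩⟩
      obtain ⟨H1, hH1det, hH1col, hv1⟩ :=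
        aux_col π (W := (1 : Matrix (Fin r) (Fin r) K)) (c := 0) (by simp)
          (Matrix.one_mulVec _) hg hp1 hz1 hpar1 (by rw [Matrix.mul_one]; exact he1)
      obtain ⟨H2, hH2det, hH2col, hv2⟩ :=
        aux_col π (aux_Wdet hr) (aux_Wcol hr) hg hp2 hz2 hpar2 he2
      have hu10 : IsUnit (H1⁻¹ 0 0) := (aux_inv_col0 π hπ hH1det hH1col).2.1
      have hu1col := (aux_inv_col0 π hπ hH1det hH1col).2.2
      obtain ⟨ε, hε, hεw⟩ := aux_unique hz₀
        (fun i => (hvw i).symm.trans (hv1 i)) hwj ⟨0, hu10⟩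
      obtain ⟨i1, hi1ne, hi1u⟩ := aux_inv_col1 π hπ hr hH2det hH2col
      obtain ⟨ε', hε', hε'w⟩ := aux_unique hz₀
        (fun i => (hvw i).symm.trans (hv2 i)) hwj ⟨i1, hi1u⟩
      have hmem : w₀ i1 ∈ Ideal.span {π} := by
        rw [hεw i1]
        exact Ideal.mul_mem_left _ _ (hu1col i1 hi1ne)
      exact (aux_mem_span_unit π hπ _).mp hmem (by rw [hε'w i1]; exact hε'.mul hi1u)
  refine ⟨hmain, ?_⟩
  intro hPKI
  have hPw : InPwKI π (Wperm : Matrix (Fin r) (Fin r) K) := by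
    refine ⟨1, 1, 1, ?_, one_ne_zero, ?_, ?_⟩
    · exact ⟨Matrix.one_apply_eq 0, fun i hi => Matrix.one_apply_ne hi, by simp⟩
    · refine ⟨1, fun i jj => ?_, by simp, fun i hi => ?_⟩
      · by_cases hij : i = jj <;> simp [Matrix.one_apply, hij]
      · rw [Matrix.one_apply_ne hi]
        exact Ideal.zero_mem _
    · rw [Matrix.one_mul, one_smul, Matrix.mul_one]
  exact (hmain Wperm (aux_Wdet hr)).2 ⟨hPKI, hPw⟩


end
end
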